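/- arXiv:1408.1103 — 5 statements merged into one kernel-verified Lean document; each statement's English description precedes it below -/
import Mathlib

section
/- Let X be a Hilbert space, K a closed subspace, and A ∈ B(X) boundedly invertible with A - I compact. If M is a closed subspace such that (A(K), M) is a Fredholm pair, then (K, M) is a Fredholm pair. -/
open Metric Set

set_option maxHeartbeats 1000000
set_option synthInstance.maxHeartbeats 100000

/-- If a subspace `V` is closed and the identity on `V` is dominated by a compact operator,
then `V` is finite dimensional. -/
lemma findim_of_norm_le_compact {E : Type*} [NormedAddCommGroup E] [NormedSpace ℝ E]
    [CompleteSpace E] (D : E →L[ℝ] E) (hD : IsCompactOperator ⇑D)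
    (V : Submodule ℝ E) (hV : IsClosed (V : Set E))
    (hb : ∀ u ∈ V, ‖u‖ ≤ ‖D u‖) : FiniteDimensional ℝ V := by
  set s : Set E := (V : Set E) ∩ Metric.closedBall 0 1 with hs
  have hsV : ∀ x ∈ s, x ∈ V := fun x hx => hx.1
  -- total boundedness of s
  have htb : TotallyBounded s := by
    rw [Metric.totallyBounded_iff]
    intro ε hε
    obtain ⟨C, hC, himg⟩ := hD.image_closedBall_subset_compact 1
    have htbD : TotallyBounded (⇑D '' s) :=
      hC.totallyBounded.subset ((Set.image_mono Set.inter_subset_right).trans himg)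
    rw [totallyBounded_iff_subset] at htbD
    obtain ⟨t, hts, htfin, hcov⟩ := htbD _ (Metric.dist_mem_uniformity hε)
    classical
    -- pick preimages of points of t in s
    choose! g hg1 hg2 using fun y (hy : y ∈ t) => hts hy
    refine ⟨g '' t, htfin.image g, ?_⟩
    intro x hx
    obtain ⟨y, hy, hdy⟩ := Set.mem_iUnion₂.1 (hcov (Set.mem_image_of_mem _ hx))
    refine Set.mem_iUnion₂.2 ⟨g y, Set.mem_image_of_mem _ hy, ?_⟩
    have hgy := hg1 y hy
    have hDgy := hg2 y hy
    have hsub : x - g y ∈ V := V.sub_mem (hsV x hx) (hsV _ hgy)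
    have : ‖x - g y‖ ≤ ‖D (x - g y)‖ := hb _ hsub
    rw [Metric.mem_ball, dist_eq_norm]
    calc ‖x - g y‖ ≤ ‖D (x - g y)‖ := this
      _ = dist (D x) y := by rw [map_sub, hDgy, dist_eq_norm]
      _ < ε := hdy
  have hclosed : IsClosed s := hV.inter Metric.isClosed_closedBall
  have hcomp : IsCompact s := TotallyBounded.isCompact_of_isClosed htb hclosed
  -- transfer to the subtype ball
  have himage : Subtype.val '' (Metric.closedBall (0 : V) 1) = s := by
    ext x
    simp only [Set.mem_image, Metric.mem_closedBall, hs, Set.mem_inter_iff, SetLike.mem_coe]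
    constructor
    · rintro ⟨y, hy, rfl⟩
      refine ⟨y.2, ?_⟩
      simpa [dist_eq_norm] using hy
    · rintro ⟨hxV, hx1⟩
      exact ⟨⟨x, hxV⟩, by simpa [dist_eq_norm, Submodule.norm_coe] using hx1, rfl⟩
  have : IsCompact (Metric.closedBall (0 : V) 1) := by
    rw [Subtype.isCompact_iff, himage]; exact hcomp
  exact FiniteDimensional.of_isCompact_closedBall₀ ℝ one_pos this

/-- Kernel of `1 + D` is finite dimensional for compact `D`. -/
lemma findim_ker_one_add_compact {E : Type*} [NormedAddCommGroup E] [NormedSpace ℝ E]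
    [CompleteSpace E] (D : E →L[ℝ] E) (hD : IsCompactOperator ⇑D) :
    FiniteDimensional ℝ (LinearMap.ker (1 + D : E →L[ℝ] E).toLinearMap) := by
  refine findim_of_norm_le_compact D hD _ (ContinuousLinearMap.isClosed_ker _) ?_
  intro u hu
  have h0 : u + D u = 0 := by simpa [ContinuousLinearMap.add_apply] using hu
  have heq : u = -D u := eq_neg_of_add_eq_zero_left h0
  have heq2 : ‖u‖ = ‖D u‖ := by
    conv_lhs => rw [heq]
    rw [norm_neg]
  exact heq2.le

lemma range_eq_range_comp_orthogonal {E F : Type*} [NormedAddCommGroup E]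
    [InnerProductSpace ℝ E] [CompleteSpace E] [NormedAddCommGroup F] [NormedSpace ℝ F]
    (T : E →L[ℝ] F) :
    LinearMap.range (T ∘L ((LinearMap.ker T.toLinearMap)ᗮ).subtypeL).toLinearMap = LinearMap.range T.toLinearMap := by
  apply le_antisymm
  · rintro _ ⟨x, rfl⟩
    exact ⟨x, rfl⟩
  · rintro _ ⟨x, rfl⟩
    set N := LinearMap.ker T.toLinearMap
    have hNc : CompleteSpace N := (ContinuousLinearMap.isClosed_ker T).completeSpace_coe
    refine ⟨⟨x - Submodule.orthogonalProjectionOnto N x, Submodule.sub_starProjection_mem_orthogonal x⟩, ?_⟩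
    have hker : T (N.starProjection x) = 0 := (Submodule.orthogonalProjectionOnto N x).2
    simp [ContinuousLinearMap.comp_apply, map_sub, hker]

/-- Range of `1 + D` is closed for compact `D` on a Hilbert space. -/
lemma isClosed_range_one_add_compact {E : Type*} [NormedAddCommGroup E]
    [InnerProductSpace ℝ E] [CompleteSpace E] (D : E →L[ℝ] E) (hD : IsCompactOperator ⇑D) :
    IsClosed (LinearMap.range (1 + D : E →L[ℝ] E).toLinearMap : Set E) := by
  set S := (1 : E →L[ℝ] E) + D with hS
  set N := LinearMap.ker S.toLinearMap with hN
  haveI hNfd : FiniteDimensional ℝ N := findim_ker_one_add_compact D hD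
  set W := Nᗮ with hW
  have hWclosed : IsClosed (W : Set E) := Submodule.isClosed_orthogonal N
  haveI : CompleteSpace W := hWclosed.completeSpace_coe
  -- bounded below on W
  have hbdd : ∃ c : ℝ, 0 < c ∧ ∀ w ∈ W, c * ‖w‖ ≤ ‖S w‖ := by
    by_contra h
    push_neg at h
    have hseq : ∀ n : ℕ, ∃ u : E, u ∈ W ∧ ‖u‖ = 1 ∧ ‖S u‖ < (n + 1 : ℝ)⁻¹ := by
      intro n
      obtain ⟨w, hwW, hw⟩ := h ((n + 1 : ℝ)⁻¹) (by positivity)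
      have hw0 : w ≠ 0 := by
        rintro rfl; simp at hw
      have hwn : ‖w‖ ≠ 0 := norm_ne_zero_iff.2 hw0
      refine ⟨‖w‖⁻¹ • w, W.smul_mem _ hwW, norm_smul_inv_norm hw0, ?_⟩
      have hcalc : ‖S (‖w‖⁻¹ • w)‖ = ‖w‖⁻¹ * ‖S w‖ := by
        rw [map_smul, norm_smul, norm_inv, norm_norm]
      rw [hcalc]
      have := mul_lt_mul_of_pos_left hw (inv_pos.2 (norm_pos_iff.2 hw0))
      calc ‖w‖⁻¹ * ‖S w‖ < ‖w‖⁻¹ * ((n + 1 : ℝ)⁻¹ * ‖w‖) := this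
        _ = (n + 1 : ℝ)⁻¹ := by field_simp
    choose u huW hu1 huS using hseq
    obtain ⟨C, hC, himg⟩ := hD.image_closedBall_subset_compact 1
    have hmem : ∀ n, D (u n) ∈ C := fun n =>
      himg ⟨u n, by simp [Metric.mem_closedBall, dist_eq_norm, (hu1 n).le], rfl⟩
    obtain ⟨a, _, φ, hφ, ha⟩ := hC.tendsto_subseq hmem
    have hSu : Filter.Tendsto (fun n => S (u n)) Filter.atTop (nhds 0) := by
      rw [tendsto_iff_norm_sub_tendsto_zero]
      refine squeeze_zero (fun n => by positivity) (fun n => ?_)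
        tendsto_one_div_add_atTop_nhds_zero_nat
      simpa [one_div] using (huS n).le
    have hSuφ : Filter.Tendsto (fun n => S (u (φ n))) Filter.atTop (nhds 0) :=
      hSu.comp hφ.tendsto_atTop
    have huφ : Filter.Tendsto (fun n => u (φ n)) Filter.atTop (nhds (-a)) := by
      have h1 : Filter.Tendsto (fun n => S (u (φ n)) - D (u (φ n))) Filter.atTop
          (nhds (0 - a)) := hSuφ.sub ha
      have h2 : (fun n => S (u (φ n)) - D (u (φ n))) = fun n => u (φ n) := by
        funext n
        show (1 + D) (u (φ n)) - D (u (φ n)) = u (φ n)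
        simp [ContinuousLinearMap.add_apply]
      rw [h2] at h1
      simpa using h1
    have haW : -a ∈ W := hWclosed.mem_of_tendsto huφ (Filter.Eventually.of_forall
      fun n => huW (φ n))
    have haN : -a ∈ N := by
      rw [hN, LinearMap.mem_ker]
      have h1 : Filter.Tendsto (fun n => S (u (φ n))) Filter.atTop (nhds (S (-a))) :=
        (S.continuous.tendsto _).comp huφ
      exact tendsto_nhds_unique h1 hSuφ
    have ha0 : -a = 0 := Submodule.disjoint_def.1 N.orthogonal_disjoint _ haN haW
    have hnorm : ‖(-a : E)‖ = 1 := by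
      have h1 := (continuous_norm.tendsto (-a : E)).comp huφ
      have h2 : ((fun b => ‖b‖) ∘ fun n => u (φ n)) = fun n : ℕ => (1 : ℝ) :=
        funext fun n => hu1 (φ n)
      rw [h2] at h1
      exact tendsto_nhds_unique h1 tendsto_const_nhds
    rw [ha0] at hnorm
    simp at hnorm
  obtain ⟨c, hc, hcb⟩ := hbdd
  set f := S ∘L W.subtypeL with hf
  have hanti : AntilipschitzWith (⟨c, hc.le⟩ : NNReal)⁻¹ ⇑f := by
    apply ContinuousLinearMap.antilipschitz_of_bound
    intro x
    have hx := hcb (x : E) x.2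
    show ‖x‖ ≤ c⁻¹ * ‖f x‖; rw [le_inv_mul_iff₀ hc]
    exact hx
  have hrange : IsClosed (Set.range ⇑f) := hanti.isClosed_range f.uniformContinuous
  have heq2 : Set.range ⇑f = (LinearMap.range S.toLinearMap : Set E) := by
    rw [← range_eq_range_comp_orthogonal S]
    ext y
    simp [hf, hW, hN, SetLike.mem_coe, LinearMap.mem_range]
  rwa [heq2] at hrange

/-- Quotient by a closed subspace is equivalent to its orthogonal complement. -/
noncomputable def quotEquivOrthogonal {E : Type*} [NormedAddCommGroup E]
    [InnerProductSpace ℝ E] [CompleteSpace E] (R : Submodule ℝ E) (hR : IsClosed (R : Set E)) :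
    (E ⧸ R) ≃ₗ[ℝ] Rᗮ :=
  haveI : CompleteSpace R := hR.completeSpace_coe
  Submodule.quotientEquivOfIsCompl R Rᗮ R.isCompl_orthogonal

/-- Cokernel of `1 + D` is finite dimensional for compact `D` on a Hilbert space. -/
lemma findim_coker_one_add_compact {E : Type*} [NormedAddCommGroup E]
    [InnerProductSpace ℝ E] [CompleteSpace E] (D : E →L[ℝ] E) (hD : IsCompactOperator ⇑D) :
    FiniteDimensional ℝ (E ⧸ LinearMap.range (1 + D : E →L[ℝ] E).toLinearMap) := by
  set S := (1 : E →L[ℝ] E) + D with hS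
  set R : Submodule ℝ E := LinearMap.range S.toLinearMap with hR
  have hRclosed : IsClosed (R : Set E) := isClosed_range_one_add_compact D hD
  haveI hfd : FiniteDimensional ℝ Rᗮ := by
    refine findim_of_norm_le_compact D hD _ (Submodule.isClosed_orthogonal R) ?_
    intro u hu
    have h0 : inner ℝ (S u) u = (0 : ℝ) :=
      (Submodule.mem_orthogonal R u).1 hu (S u) (LinearMap.mem_range_self _ u)
    have h1 : inner ℝ (S u) u = ‖u‖ ^ 2 + inner ℝ (D u) u := by
      rw [hS]
      simp [ContinuousLinearMap.add_apply, inner_add_left, real_inner_self_eq_norm_sq]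
    have h2 : ‖u‖ ^ 2 = -inner ℝ (D u) u := by
      rw [h1] at h0; linarith
    have h3 : ‖u‖ ^ 2 ≤ ‖D u‖ * ‖u‖ := by
      rw [h2]
      calc -inner ℝ (D u) u ≤ |inner ℝ (D u) u| := neg_le_abs _
        _ ≤ ‖D u‖ * ‖u‖ := abs_real_inner_le_norm _ _
    rcases eq_or_lt_of_le (norm_nonneg u) with h | h
    · rw [← h]; exact norm_nonneg _
    · nlinarith [h3]
  exact (quotEquivOrthogonal R hRclosed).symm.finiteDimensional

/-- A continuous linear map whose range lies in a finite dimensional subspace is compact. -/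
lemma isCompactOperator_of_range_le_findim {E F : Type*} [NormedAddCommGroup E]
    [NormedSpace ℝ E] [NormedAddCommGroup F] [NormedSpace ℝ F]
    (g : E →L[ℝ] F) (W : Submodule ℝ F) [FiniteDimensional ℝ W]
    (h : ∀ x, g x ∈ W) : IsCompactOperator ⇑g := by
  set g' : E →L[ℝ] W := g.codRestrict W h with hg'
  have hcomp : ⇑g = (Submodule.subtypeL W) ∘ ⇑g' := by
    funext x; rfl
  have hg'c : IsCompactOperator ⇑g' := by
    refine (isCompactOperator_iff_image_closedBall_subset_compact
      (g' : E →ₗ[ℝ] ↥W) one_pos).2 ?_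
    refine ⟨Metric.closedBall 0 ‖g'‖, isCompact_closedBall _ _, ?_⟩
    rintro _ ⟨x, hx, rfl⟩
    rw [Metric.mem_closedBall, dist_zero_right]
    calc ‖g' x‖ ≤ ‖g'‖ * ‖x‖ := g'.le_opNorm x
      _ ≤ ‖g'‖ * 1 := by
          refine mul_le_mul_of_nonneg_left ?_ (norm_nonneg g')
          simpa [dist_zero_right] using Metric.mem_closedBall.1 hx
      _ = ‖g'‖ := mul_one _
  rw [hcomp]
  exact hg'c.continuous_comp (Submodule.subtypeL W).continuous

/-- A continuous linear map with finite dimensional (algebraic) cokernel has closed range. -/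
lemma isClosed_range_of_findim_coker {E F : Type*} [NormedAddCommGroup E]
    [InnerProductSpace ℝ E] [CompleteSpace E] [NormedAddCommGroup F] [NormedSpace ℝ F]
    [CompleteSpace F] (T : E →L[ℝ] F)
    (hfd : FiniteDimensional ℝ (F ⧸ LinearMap.range T.toLinearMap)) :
    IsClosed (LinearMap.range T.toLinearMap : Set F) := by
  classical
  set N := LinearMap.ker T.toLinearMap with hN
  set W := Nᗮ with hW
  haveI : CompleteSpace N := (ContinuousLinearMap.isClosed_ker T).completeSpace_coe
  haveI : CompleteSpace W := (Submodule.isClosed_orthogonal N).completeSpace_coe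
  set R : Submodule ℝ F := LinearMap.range T.toLinearMap with hR
  obtain ⟨q, hq⟩ := Submodule.exists_isCompl R
  haveI hqfd : FiniteDimensional ℝ q :=
    (Submodule.quotientEquivOfIsCompl R q hq).finiteDimensional
  haveI : CompleteSpace q := FiniteDimensional.complete ℝ q
  set S : (W × q) →L[ℝ] F :=
    (T ∘L W.subtypeL) ∘L ContinuousLinearMap.fst ℝ W q
      + q.subtypeL ∘L ContinuousLinearMap.snd ℝ W q with hSdef
  have hSapp : ∀ p : W × q, S p = T (p.1 : E) + (p.2 : F) := fun p => rfl
  have hker : LinearMap.ker S.toLinearMap = ⊥ := by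
    rw [LinearMap.ker_eq_bot']
    rintro ⟨w, y⟩ hp
    have hp' : T (w : E) + (y : F) = 0 := by rw [← hSapp (w, y)]; exact hp
    have hyR : (y : F) ∈ R := by
      have hy : (y : F) = -T (w : E) := eq_neg_of_add_eq_zero_right hp'
      rw [hy]
      exact R.neg_mem ⟨(w : E), rfl⟩
    have hy0 : (y : F) = 0 := Submodule.disjoint_def.1 hq.disjoint _ hyR y.2
    have hw0 : T (w : E) = 0 := by rw [hy0, add_zero] at hp'; exact hp'
    have hw0' : (w : E) = 0 := Submodule.disjoint_def.1 N.orthogonal_disjoint _ hw0 w.2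
    have hww : w = 0 := Subtype.ext hw0'
    have hyy : y = 0 := Subtype.ext hy0
    rw [hww, hyy]; rfl
  have hrange : LinearMap.range S.toLinearMap = ⊤ := by
    rw [LinearMap.range_eq_top]
    intro z
    have hz : z ∈ R ⊔ q := by rw [hq.sup_eq_top]; trivial
    obtain ⟨r, hr, y, hy, rfl⟩ := Submodule.mem_sup.1 hz
    obtain ⟨x, rfl⟩ := hr
    refine ⟨(⟨x - Submodule.orthogonalProjectionOnto N x, Submodule.sub_starProjection_mem_orthogonal x⟩,
      ⟨y, hy⟩), ?_⟩
    rw [ContinuousLinearMap.coe_coe, hSapp]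
    have hx0 : T (N.starProjection x) = 0 := (Submodule.orthogonalProjectionOnto N x).2
    simp [map_sub, hx0]
  let e := ContinuousLinearEquiv.ofBijective S hker hrange
  have he : ⇑e = ⇑S := ContinuousLinearEquiv.coeFn_ofBijective S hker hrange
  have himg : (R : Set F) = ⇑e '' (Set.range (fun w : W => ((w, 0) : W × q))) := by
    ext z
    constructor
    · intro hz
      obtain ⟨x, rfl⟩ := hz
      refine ⟨(⟨x - Submodule.orthogonalProjectionOnto N x, Submodule.sub_starProjection_mem_orthogonal x⟩, 0),
        ⟨_, rfl⟩, ?_⟩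
      rw [he, hSapp]
      have hx0 : T (N.starProjection x) = 0 := (Submodule.orthogonalProjectionOnto N x).2
      simp [map_sub, hx0]
    · rintro ⟨_, ⟨w, rfl⟩, rfl⟩
      rw [he, hSapp]
      simpa using ⟨(w : E), rfl⟩
  rw [himg]
  apply e.toHomeomorph.isClosedMap
  have : Set.range (fun w : W => ((w, 0) : W × q)) = Set.univ ×ˢ {0} := by
    ext p
    simp [Set.mem_prod, eq_comm, Prod.ext_iff]
  rw [this]
  exact isClosed_univ.prod isClosed_singleton

/-- Stability of the Fredholm property under compact perturbation (Hilbert spaces). -/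
lemma fredholm_stability {E F : Type*} [NormedAddCommGroup E] [InnerProductSpace ℝ E]
    [CompleteSpace E] [NormedAddCommGroup F] [InnerProductSpace ℝ F] [CompleteSpace F]
    (T T' : E →L[ℝ] F) (hcomp : IsCompactOperator ⇑(T' - T))
    (hker : FiniteDimensional ℝ (LinearMap.ker T.toLinearMap))
    (hcoker : FiniteDimensional ℝ (F ⧸ LinearMap.range T.toLinearMap)) :
    FiniteDimensional ℝ (LinearMap.ker T'.toLinearMap) ∧
      FiniteDimensional ℝ (F ⧸ LinearMap.range T'.toLinearMap) := by
  classical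
  set N := LinearMap.ker T.toLinearMap with hN
  set R : Submodule ℝ F := LinearMap.range T.toLinearMap with hR
  have hRclosed : IsClosed (R : Set F) := isClosed_range_of_findim_coker T hcoker
  haveI : CompleteSpace R := hRclosed.completeSpace_coe
  haveI : CompleteSpace N := (ContinuousLinearMap.isClosed_ker T).completeSpace_coe
  haveI : CompleteSpace (Nᗮ : Submodule ℝ E) :=
    (Submodule.isClosed_orthogonal N).completeSpace_coe
  haveI hRofd : FiniteDimensional ℝ (Rᗮ : Submodule ℝ F) :=
    (quotEquivOrthogonal R hRclosed).finiteDimensional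
  -- the bijection between `Nᗮ` and `R`
  set f : (Nᗮ : Submodule ℝ E) →L[ℝ] R :=
    (T ∘L Nᗮ.subtypeL).codRestrict R (fun x => ⟨(x : E), rfl⟩) with hfdef
  have hfapp : ∀ x : Nᗮ, (f x : F) = T (x : E) := fun x => rfl
  have hfker : LinearMap.ker f.toLinearMap = ⊥ := by
    rw [LinearMap.ker_eq_bot']
    intro x hx
    have hx' : T (x : E) = 0 := by rw [← hfapp x, ← ContinuousLinearMap.coe_coe f, hx]; rfl
    exact Subtype.ext (Submodule.disjoint_def.1 N.orthogonal_disjoint _ hx' x.2)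
  have hfrange : LinearMap.range f.toLinearMap = ⊤ := by
    rw [LinearMap.range_eq_top]
    rintro ⟨_, x, rfl⟩
    refine ⟨⟨x - Submodule.orthogonalProjectionOnto N x, Submodule.sub_starProjection_mem_orthogonal x⟩, ?_⟩
    apply Subtype.ext
    rw [ContinuousLinearMap.coe_coe, hfapp]
    have hx0 : T (N.starProjection x) = 0 := (Submodule.orthogonalProjectionOnto N x).2
    simp [map_sub, hx0]
  let e := ContinuousLinearEquiv.ofBijective f hfker hfrange
  have he : ⇑e = ⇑f := ContinuousLinearEquiv.coeFn_ofBijective f hfker hfrange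
  set Sinv : F →L[ℝ] E :=
    Nᗮ.subtypeL ∘L ((e.symm : R →L[ℝ] (Nᗮ : Submodule ℝ E)) ∘L Submodule.orthogonalProjectionOnto R)
    with hSinv
  have key : ∀ z : F, T (Sinv z) = (Submodule.orthogonalProjectionOnto R z : F) := by
    intro z
    have h1 : ∀ y : R, T ((e.symm y : Nᗮ) : E) = (y : F) := by
      intro y
      have h2 : e (e.symm y) = y := e.apply_symm_apply y
      rw [he] at h2
      rw [← hfapp]
      exact congrArg Subtype.val h2
    exact h1 _
  have hG : ∀ x : E, T (Sinv (T x)) = T x := by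
    intro x
    rw [key]
    exact Submodule.starProjection_eq_self_iff.2 ⟨x, rfl⟩
  -- kernel part
  set D1 : E →L[ℝ] E := Sinv ∘L T' - 1 with hD1
  have hD1c : IsCompactOperator ⇑D1 := by
    have hsplit : ⇑D1 = ⇑(Sinv ∘L T - 1) + ⇑(Sinv ∘L (T' - T)) := by
      funext x
      show Sinv (T' x) - x = (Sinv (T x) - x) + Sinv (T' x - T x)
      rw [map_sub]
      abel
    rw [hsplit]
    refine IsCompactOperator.add ?_ ?_
    · refine isCompactOperator_of_range_le_findim _ N ?_
      intro x
      show Sinv (T x) - x ∈ N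
      rw [hN, LinearMap.mem_ker, ContinuousLinearMap.coe_coe, map_sub, hG]
      simp
    · exact hcomp.continuous_comp Sinv.continuous
  have hone1 : (1 : E →L[ℝ] E) + D1 = Sinv ∘L T' := by rw [hD1]; abel
  haveI hk1 : FiniteDimensional ℝ (LinearMap.ker ((1 : E →L[ℝ] E) + D1).toLinearMap) :=
    findim_ker_one_add_compact D1 hD1c
  have hkle : LinearMap.ker T'.toLinearMap ≤ LinearMap.ker ((1 : E →L[ℝ] E) + D1).toLinearMap := by
    rw [hone1]
    intro x hx
    rw [LinearMap.mem_ker] at hx ⊢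
    show Sinv (T' x) = 0
    rw [← ContinuousLinearMap.coe_coe T', hx, map_zero]
  have hfin1 : FiniteDimensional ℝ (LinearMap.ker T'.toLinearMap) :=
    Submodule.finiteDimensional_of_le hkle
  -- cokernel part
  set D2 : F →L[ℝ] F := T' ∘L Sinv - 1 with hD2
  have hD2c : IsCompactOperator ⇑D2 := by
    have hsplit : ⇑D2 = ⇑(T ∘L Sinv - 1) + ⇑((T' - T) ∘L Sinv) := by
      funext z
      show T' (Sinv z) - z = (T (Sinv z) - z) + (T' - T) (Sinv z)
      rw [ContinuousLinearMap.sub_apply]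
      abel
    rw [hsplit]
    refine IsCompactOperator.add ?_ ?_
    · refine isCompactOperator_of_range_le_findim _ Rᗮ ?_
      intro z
      show T (Sinv z) - z ∈ Rᗮ
      rw [key]
      have := Rᗮ.neg_mem (Submodule.sub_starProjection_mem_orthogonal (K := R) z)
      simpa using this
    · exact hcomp.comp_clm Sinv
  have hone2 : (1 : F →L[ℝ] F) + D2 = T' ∘L Sinv := by rw [hD2]; abel
  haveI hk2 : FiniteDimensional ℝ (F ⧸ LinearMap.range ((1 : F →L[ℝ] F) + D2).toLinearMap) :=
    findim_coker_one_add_compact D2 hD2c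
  set R2 : Submodule ℝ F := LinearMap.range ((1 : F →L[ℝ] F) + D2).toLinearMap with hR2
  have hle2 : R2 ≤ LinearMap.range T'.toLinearMap := by
    rw [hR2, hone2]
    rintro _ ⟨z, rfl⟩
    exact ⟨Sinv z, rfl⟩
  have hfin2 : FiniteDimensional ℝ (F ⧸ LinearMap.range T'.toLinearMap) := by
    set π := Submodule.mapQ R2 (LinearMap.range T'.toLinearMap) LinearMap.id
      (fun x hx => hle2 hx) with hπ
    have hsurj : Function.Surjective π := by
      intro y
      obtain ⟨x, rfl⟩ := (LinearMap.range T'.toLinearMap).mkQ_surjective y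
      exact ⟨R2.mkQ x, by simp [hπ, Submodule.mapQ_apply]⟩
    exact Module.Finite.of_surjective π hsurj
  exact ⟨hfin1, hfin2⟩

section Bridge

variable {X : Type*} [NormedAddCommGroup X] [InnerProductSpace ℝ X] [CompleteSpace X]
  (K M : Submodule ℝ X)

/-- Kernel of `proj_{Mᗮ} ∘ B ∘ ι_K` is isomorphic to `B(K) ⊓ M`. -/
noncomputable def kerBridge (hM : IsClosed (M : Set X)) (B : X →L[ℝ] X)
    (hB : Function.Injective ⇑B) :
    haveI : CompleteSpace M := hM.completeSpace_coe
    ↥(LinearMap.ker ((Submodule.orthogonalProjectionOnto Mᗮ) ∘L (B ∘L K.subtypeL)).toLinearMap) ≃ₗ[ℝ]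
      ↥(K.map (B : X →ₗ[ℝ] X) ⊓ M) := by
  haveI : CompleteSpace M := hM.completeSpace_coe
  set P := Submodule.orthogonalProjectionOnto Mᗮ with hP
  have hkerP : LinearMap.ker P.toLinearMap = M := by
    rw [hP, Submodule.ker_orthogonalProjectionOnto, Submodule.orthogonal_orthogonal]
  set T := P ∘L (B ∘L K.subtypeL) with hT
  have hmem : ∀ x : LinearMap.ker T.toLinearMap, B ((x : K) : X) ∈ K.map (B : X →ₗ[ℝ] X) ⊓ M := by
    intro x
    refine ⟨⟨((x : K) : X), (x : K).2, rfl⟩, ?_⟩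
    have hx : B ((x : K) : X) ∈ LinearMap.ker P.toLinearMap := x.2
    rwa [hkerP] at hx
  refine LinearEquiv.ofBijective
    (LinearMap.codRestrict (K.map (B : X →ₗ[ℝ] X) ⊓ M)
      ((B.toLinearMap.comp K.subtype).comp (LinearMap.ker T.toLinearMap).subtype) hmem) ⟨?_, ?_⟩
  · intro x y hxy
    have h1 := congrArg Subtype.val hxy
    have h2 : B ((x : K) : X) = B ((y : K) : X) := h1
    exact Subtype.ext (Subtype.ext (hB h2))
  · rintro ⟨y, hy1, hy2⟩
    obtain ⟨k, hk, rfl⟩ := hy1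
    have hker : P (B k) = 0 := by
      have h0 : B k ∈ LinearMap.ker P.toLinearMap := by rw [hkerP]; exact hy2
      exact h0
    refine ⟨⟨⟨k, hk⟩, hker⟩, rfl⟩

/-- Cokernel of `proj_{Mᗮ} ∘ B ∘ ι_K` is isomorphic to `X ⧸ (B(K) ⊔ M)`. -/
noncomputable def cokerBridge (hM : IsClosed (M : Set X)) (B : X →L[ℝ] X) :
    haveI : CompleteSpace M := hM.completeSpace_coe
    (X ⧸ (K.map (B : X →ₗ[ℝ] X) ⊔ M)) ≃ₗ[ℝ]
      ((↥Mᗮ) ⧸ LinearMap.range ((Submodule.orthogonalProjectionOnto Mᗮ) ∘L (B ∘L K.subtypeL)).toLinearMap) := by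
  haveI : CompleteSpace M := hM.completeSpace_coe
  set P := Submodule.orthogonalProjectionOnto Mᗮ with hP
  have hkerP : LinearMap.ker P.toLinearMap = M := by
    rw [hP, Submodule.ker_orthogonalProjectionOnto, Submodule.orthogonal_orthogonal]
  set T := P ∘L (B ∘L K.subtypeL) with hT
  set q2 : X →ₗ[ℝ] ((↥Mᗮ) ⧸ LinearMap.range T.toLinearMap) :=
    (LinearMap.range T.toLinearMap).mkQ ∘ₗ P.toLinearMap with hq2
  have hsurj : Function.Surjective q2 := by
    intro y
    obtain ⟨z, rfl⟩ := (LinearMap.range T.toLinearMap).mkQ_surjective y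
    refine ⟨(z : X), ?_⟩
    have : P ((z : ↥Mᗮ) : X) = z := Submodule.orthogonalProjectionOnto_mem_subspace_eq_self z
    simp [hq2, this]
  have hker : LinearMap.ker q2 = K.map (B : X →ₗ[ℝ] X) ⊔ M := by
    ext x
    rw [LinearMap.mem_ker]
    constructor
    · intro hx
      have hx' : P x ∈ LinearMap.range T.toLinearMap := by
        rwa [hq2, LinearMap.comp_apply, ← LinearMap.mem_ker, Submodule.ker_mkQ] at hx
      obtain ⟨k, hk⟩ := hx'
      have hmemM : x - B ((k : K) : X) ∈ M := by
        have h0 : x - B ((k : K) : X) ∈ LinearMap.ker P.toLinearMap := by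
          rw [LinearMap.mem_ker, ContinuousLinearMap.coe_coe, map_sub]
          have h1 : P (B ((k : K) : X)) = T k := rfl
          rw [h1, ← ContinuousLinearMap.coe_coe T, hk]
          simp
        rwa [hkerP] at h0
      refine Submodule.mem_sup.2 ⟨B ((k : K) : X), ⟨((k : K) : X), (k : K).2, rfl⟩,
        x - B ((k : K) : X), hmemM, ?_⟩
      abel
    · intro hx
      obtain ⟨b, hb, m, hm, rfl⟩ := Submodule.mem_sup.1 hx
      obtain ⟨k, hk, rfl⟩ := hb
      have hPm : P m = 0 := by
        have h0 : m ∈ LinearMap.ker P.toLinearMap := by rw [hkerP]; exact hm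
        exact h0
      have hPx : P (B k + m) = T ⟨k, hk⟩ := by
        rw [map_add, hPm, add_zero]; rfl
      rw [hq2, LinearMap.comp_apply]
      show (LinearMap.range T.toLinearMap).mkQ (P (B k + m)) = 0
      rw [hPx, ← LinearMap.mem_ker, Submodule.ker_mkQ]
      exact LinearMap.mem_range_self T.toLinearMap ⟨k, hk⟩
  exact (Submodule.quotEquivOfEq _ _ hker.symm) ≪≫ₗ q2.quotKerEquivOfSurjective hsurj

end Bridge

/-- If `A` is boundedly invertible with `A - I` compact and `(A(K), M)` is a Fredholm
pair of closed subspaces, then `(K, M)` is a Fredholm pair. -/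
theorem statement2 {X : Type*} [NormedAddCommGroup X] [InnerProductSpace ℝ X]
    [CompleteSpace X]
    (A : X →L[ℝ] X) (hA : IsUnit A) (hAc : IsCompactOperator (⇑(A - 1)))
    (K M : Submodule ℝ X) (hK : IsClosed (K : Set X)) (hM : IsClosed (M : Set X))
    (hFred : FiniteDimensional ℝ ↥(K.map (A : X →ₗ[ℝ] X) ⊓ M) ∧
      FiniteDimensional ℝ (X ⧸ (K.map (A : X →ₗ[ℝ] X) ⊔ M))) :
    FiniteDimensional ℝ ↥(K ⊓ M) ∧ FiniteDimensional ℝ (X ⧸ (K ⊔ M)) := by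
  classical
  haveI : CompleteSpace M := hM.completeSpace_coe
  haveI : CompleteSpace K := hK.completeSpace_coe
  haveI : CompleteSpace (Mᗮ : Submodule ℝ X) := (Submodule.isClosed_orthogonal M).completeSpace_coe
  set P := Submodule.orthogonalProjectionOnto Mᗮ with hP
  set TA := P ∘L (A ∘L K.subtypeL) with hTA
  set T0 := P ∘L ((1 : X →L[ℝ] X) ∘L K.subtypeL) with hT0
  -- compactness of the difference
  have hdiff : IsCompactOperator ⇑(T0 - TA) := by
    have h1 : IsCompactOperator (⇑(A - 1) ∘ ⇑K.subtypeL) := hAc.comp_clm K.subtypeL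
    have h2 : IsCompactOperator (⇑P ∘ (⇑(A - 1) ∘ ⇑K.subtypeL)) :=
      h1.continuous_comp P.continuous
    have h3 : IsCompactOperator (-(⇑P ∘ (⇑(A - 1) ∘ ⇑K.subtypeL))) := h2.neg
    have heq : ⇑(T0 - TA) = -(⇑P ∘ (⇑(A - 1) ∘ ⇑K.subtypeL)) := by
      funext x
      show P ((1 : X →L[ℝ] X) (x : X)) - P (A (x : X)) = -(P ((A - 1) (x : X)))
      rw [ContinuousLinearMap.sub_apply, ContinuousLinearMap.one_apply, map_sub]
      abel
    rw [heq]
    exact h3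
  -- injectivity of A
  have hAinj : Function.Injective ⇑A := by
    obtain ⟨u, hu⟩ := hA
    intro x y hxy
    have h2 : ∀ z : X, ((u⁻¹ : (X →L[ℝ] X)ˣ) : X →L[ℝ] X) (A z) = z := by
      intro z
      rw [← hu, ← ContinuousLinearMap.mul_apply, u.inv_mul, ContinuousLinearMap.one_apply]
    have h1 := congrArg (⇑((u⁻¹ : (X →L[ℝ] X)ˣ) : X →L[ℝ] X)) hxy
    rw [h2 x, h2 y] at h1
    exact h1
  -- hypotheses of the stability lemma
  haveI hfd1 : FiniteDimensional ℝ ↥(K.map (A : X →ₗ[ℝ] X) ⊓ M) := hFred.1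
  haveI hfd2 : FiniteDimensional ℝ (X ⧸ (K.map (A : X →ₗ[ℝ] X) ⊔ M)) := hFred.2
  haveI hkerTA : FiniteDimensional ℝ (LinearMap.ker TA.toLinearMap) :=
    (kerBridge K M hM A hAinj).symm.finiteDimensional
  haveI hcokerTA : FiniteDimensional ℝ ((↥Mᗮ) ⧸ LinearMap.range TA.toLinearMap) :=
    (cokerBridge K M hM A).finiteDimensional
  obtain ⟨h1, h2⟩ := fredholm_stability TA T0 hdiff hkerTA hcokerTA
  have hmap1 : K.map ((1 : X →L[ℝ] X) : X →ₗ[ℝ] X) = K := by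
    ext x
    simp [Submodule.mem_map]
  constructor
  · haveI := h1
    haveI : FiniteDimensional ℝ ↥(K.map ((1 : X →L[ℝ] X) : X →ₗ[ℝ] X) ⊓ M) :=
      (kerBridge K M hM (1 : X →L[ℝ] X) (fun x y h => by simpa using h)).finiteDimensional
    have heq : K.map ((1 : X →L[ℝ] X) : X →ₗ[ℝ] X) ⊓ M = K ⊓ M := by rw [hmap1]
    exact (LinearEquiv.ofEq _ _ heq).finiteDimensional
  · haveI := h2
    haveI : FiniteDimensional ℝ (X ⧸ (K.map ((1 : X →L[ℝ] X) : X →ₗ[ℝ] X) ⊔ M)) :=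
      (cokerBridge K M hM (1 : X →L[ℝ] X)).symm.finiteDimensional
    have heq : K.map ((1 : X →L[ℝ] X) : X →ₗ[ℝ] X) ⊔ M = K ⊔ M := by rw [hmap1]
    exact (Submodule.quotEquivOfEq _ _ heq).finiteDimensional
end

section
/- Let X be a real Hilbert space with complex structure J (J ∈ B(X), J* = -J, J² = -I) and symplectic form ω(u,v) = ⟨Ju, v⟩. Let K be a Lagrangian subspace of X, and let L = A(K) where A ∈ B(X) is boundedly invertible with A - I compact. If ω vanishes on L (i.e. ω(u,v) = 0 for all u, v ∈ L), then L is Lagrangian. -/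
open Filter Topology ContinuousLinearMap

set_option linter.unusedSectionVars false
set_option linter.unusedVariables false
set_option maxHeartbeats 1000000

section Aux

variable {X : Type*} [NormedAddCommGroup X] [InnerProductSpace ℝ X] [CompleteSpace X]


lemma compact_seq (C : X →L[ℝ] X) (hC : IsCompactOperator ⇑C) (x : ℕ → X) {r : ℝ}
    (hx : ∀ n, ‖x n‖ ≤ r) :
    ∃ l : X, ∃ φ : ℕ → ℕ, StrictMono φ ∧ Tendsto (fun n => C (x (φ n))) atTop (𝓝 l) := by
  have hcomp : IsCompact (closure (⇑C '' Metric.closedBall 0 r)) :=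
    hC.isCompact_closure_image_closedBall (𝕜₁ := ℝ) r
  have hmem : ∀ n, C (x n) ∈ closure (⇑C '' Metric.closedBall 0 r) := fun n =>
    subset_closure ⟨x n, by simpa [Metric.mem_closedBall, dist_eq_norm] using hx n, rfl⟩
  obtain ⟨l, -, φ, hφ, hconv⟩ := hcomp.tendsto_subseq hmem
  exact ⟨l, φ, hφ, hconv⟩

/-- Sequential criterion for compactness of an operator. -/
lemma seq_compact (C : X →L[ℝ] X)
    (h : ∀ x : ℕ → X, (∀ n, ‖x n‖ ≤ 1) →
      ∃ l : X, ∃ φ : ℕ → ℕ, StrictMono φ ∧ Tendsto (fun n => C (x (φ n))) atTop (𝓝 l)) :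
    IsCompactOperator ⇑C := by
  suffices key : IsCompactOperator ⇑(C : X →ₗ[ℝ] X) by exact key
  rw [isCompactOperator_iff_isCompact_closure_image_closedBall (𝕜₁ := ℝ) (f := (C : X →ₗ[ℝ] X))
    (r := 1) one_pos]
  apply IsSeqCompact.isCompact
  intro y hy
  have hch : ∀ n : ℕ, ∃ x : X, ‖x‖ ≤ 1 ∧ dist (C x) (y n) < 1 / (n + 1) := by
    intro n
    have := Metric.mem_closure_iff.mp (hy n) (1 / (n + 1)) (by positivity)
    obtain ⟨b, ⟨x, hx, rfl⟩, hb⟩ := this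
    exact ⟨x, by simpa [Metric.mem_closedBall, dist_eq_norm] using hx,
      by simpa [dist_comm] using hb⟩
  choose x hx1 hx2 using hch
  obtain ⟨l, φ, hφ, hconv⟩ := h x hx1
  refine ⟨l, ?_, φ, hφ, ?_⟩
  · exact isClosed_closure.mem_of_tendsto hconv
      (Eventually.of_forall fun n => subset_closure ⟨x (φ n), by
        simpa [Metric.mem_closedBall, dist_eq_norm] using hx1 (φ n), rfl⟩)
  · have hd : Tendsto (fun n => dist ((C : X →ₗ[ℝ] X) (x (φ n))) (y (φ n))) atTop (𝓝 0) := by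
      apply squeeze_zero (fun n => dist_nonneg) (fun n => (hx2 (φ n)).le)
      have h1 : Tendsto (fun n : ℕ => 1 / ((n : ℝ) + 1)) atTop (𝓝 0) :=
        tendsto_one_div_add_atTop_nhds_zero_nat
      exact h1.comp hφ.tendsto_atTop
    have hc2 := hconv
    rw [tendsto_iff_dist_tendsto_zero] at hc2 ⊢
    apply squeeze_zero (fun n => dist_nonneg)
      (fun n => dist_triangle (y (φ n)) ((C : X →ₗ[ℝ] X) (x (φ n))) l)
    simpa [dist_comm] using hd.add hc2

/-- Schauder's theorem in Hilbert space: the adjoint of a compact operator is compact. -/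
lemma schauder (C : X →L[ℝ] X) (hC : IsCompactOperator ⇑C) :
    IsCompactOperator ⇑(adjoint C) := by
  apply seq_compact
  intro x hx
  have hCC : IsCompactOperator ⇑(C ∘L adjoint C) := by
    have h := hC.comp_clm (adjoint C)
    exact h
  obtain ⟨l, φ, hφ, hconv⟩ := compact_seq (C ∘L adjoint C) hCC x hx
  have hcauchy0 : CauchySeq (fun n => (C ∘L adjoint C) (x (φ n))) := hconv.cauchySeq
  have key : ∀ u v : X, ‖u‖ ≤ 1 → ‖v‖ ≤ 1 →
      ‖adjoint C u - adjoint C v‖ ^ 2 ≤ 2 * ‖(C ∘L adjoint C) u - (C ∘L adjoint C) v‖ := by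
    intro u v hu hv
    have h1 : ‖adjoint C u - adjoint C v‖ ^ 2
        = (inner ℝ (u - v) ((C ∘L adjoint C) (u - v)) : ℝ) := by
      rw [← map_sub, ← real_inner_self_eq_norm_sq]
      rw [adjoint_inner_left]
      rfl
    rw [h1]
    calc (inner ℝ (u - v) ((C ∘L adjoint C) (u - v)) : ℝ)
        ≤ ‖u - v‖ * ‖(C ∘L adjoint C) (u - v)‖ := real_inner_le_norm _ _
      _ ≤ 2 * ‖(C ∘L adjoint C) u - (C ∘L adjoint C) v‖ := by
          rw [map_sub]
          have hn : ‖u - v‖ ≤ 2 := by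
            calc ‖u - v‖ ≤ ‖u‖ + ‖v‖ := norm_sub_le _ _
              _ ≤ 2 := by linarith
          exact mul_le_mul_of_nonneg_right hn (norm_nonneg _)
  have hcauchy : CauchySeq (fun n => adjoint C (x (φ n))) := by
    rw [Metric.cauchySeq_iff] at hcauchy0 ⊢
    intro ε hε
    obtain ⟨N, hN⟩ := hcauchy0 (ε ^ 2 / 2) (by positivity)
    refine ⟨N, fun m hm n hn => ?_⟩
    have h2 := hN m hm n hn
    have hk := key (x (φ m)) (x (φ n)) (hx _) (hx _)
    rw [dist_eq_norm] at h2 ⊢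
    nlinarith [norm_nonneg (adjoint C (x (φ m)) - adjoint C (x (φ n)))]
  obtain ⟨l2, hl2⟩ := cauchySeq_tendsto_of_complete hcauchy
  exact ⟨l2, φ, hφ, hl2⟩


lemma unit_inj (u : (X →L[ℝ] X)ˣ) : Function.Injective ⇑(↑u : X →L[ℝ] X) := by
  intro a b hab
  have h := congrArg (⇑(↑u⁻¹ : X →L[ℝ] X)) hab
  rwa [← ContinuousLinearMap.mul_apply, ← ContinuousLinearMap.mul_apply, u.inv_mul,
    ContinuousLinearMap.one_apply, ContinuousLinearMap.one_apply] at h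

lemma map_unit_closed (u : (X →L[ℝ] X)ˣ) (K : Submodule ℝ X) (hK : IsClosed (K : Set X)) :
    IsClosed ((K.map ((↑u : X →L[ℝ] X) : X →ₗ[ℝ] X)) : Set X) := by
  have hset : ((K.map ((↑u : X →L[ℝ] X) : X →ₗ[ℝ] X)) : Set X) = ⇑(↑u⁻¹ : X →L[ℝ] X) ⁻¹' K := by
    ext x
    simp only [Set.mem_preimage, SetLike.mem_coe, Submodule.mem_map]
    constructor
    · rintro ⟨k, hk, rfl⟩
      rwa [ContinuousLinearMap.coe_coe, ← ContinuousLinearMap.mul_apply, u.inv_mul, ContinuousLinearMap.one_apply]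
    · intro hx
      exact ⟨_, hx, by rw [ContinuousLinearMap.coe_coe, ← ContinuousLinearMap.mul_apply, u.mul_inv,
        ContinuousLinearMap.one_apply]⟩
  rw [hset]
  exact hK.preimage (↑u⁻¹ : X →L[ℝ] X).continuous


/-- Riesz-type lemma: if `S` is invertible with `S - 1` compact and `S` maps the closed
subspace `K` into itself, then `S(K) = K`. -/
lemma riesz_surj (u : (X →L[ℝ] X)ˣ) (hC : IsCompactOperator ⇑((↑u : X →L[ℝ] X) - 1))
    (K : Submodule ℝ X) (hK : IsClosed (K : Set X))
    (hSK : ∀ k ∈ K, (↑u : X →L[ℝ] X) k ∈ K) :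
    ∀ x ∈ K, x ∈ K.map ((↑u : X →L[ℝ] X) : X →ₗ[ℝ] X) := by
  set S : X →L[ℝ] X := ↑u with hSdef
  by_contra hcon
  push_neg at hcon
  obtain ⟨x₀, hx₀K, hx₀⟩ := hcon
  set Kn : ℕ → Submodule ℝ X := fun n => K.map (((S ^ n : X →L[ℝ] X) : X →ₗ[ℝ] X)) with hKn
  have hvalpow : ∀ n : ℕ, ((u ^ n : (X →L[ℝ] X)ˣ) : X →L[ℝ] X) = S ^ n := fun n =>
    Units.val_pow_eq_pow_val u n
  have hclosed : ∀ n, IsClosed ((Kn n : Submodule ℝ X) : Set X) := by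
    intro n
    have := map_unit_closed (u ^ n) K hK
    rwa [hvalpow n] at this
  have hstep : ∀ n, ∀ x ∈ Kn n, S x ∈ Kn (n + 1) := by
    rintro n x ⟨k, hk, rfl⟩
    exact ⟨k, hk, by rw [pow_succ']; rfl⟩
  have hmono : ∀ n, Kn (n + 1) ≤ Kn n := by
    rintro n x ⟨k, hk, rfl⟩
    exact ⟨S k, hSK k hk, by rw [ContinuousLinearMap.coe_coe, ← ContinuousLinearMap.mul_apply, ← pow_succ, ContinuousLinearMap.coe_coe]⟩
  have hanti : Antitone Kn := antitone_nat_of_succ_le hmono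
  have hzmem : ∀ n, (S ^ n) x₀ ∈ Kn n := fun n => ⟨x₀, hx₀K, rfl⟩
  have hznot : ∀ n, (S ^ n) x₀ ∉ Kn (n + 1) := by
    rintro n ⟨k, hk, hEq⟩
    apply hx₀
    refine ⟨k, hk, ?_⟩
    have hinj : Function.Injective ⇑(S ^ n) := by
      have := unit_inj (u ^ n)
      rwa [hvalpow n] at this
    apply hinj
    rw [ContinuousLinearMap.coe_coe] at hEq ⊢
    rw [← ContinuousLinearMap.mul_apply, ← pow_succ, hEq]
  -- construct orthonormal-ish sequence
  have hxc : ∀ n, ∃ w : X, w ∈ Kn n ∧ w ∈ (Kn (n + 1))ᗮ ∧ ‖w‖ = 1 := by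
    intro n
    haveI : CompleteSpace (Kn (n + 1)) := (hclosed (n + 1)).completeSpace_coe
    set z := (S ^ n) x₀ with hz
    set w := z - (Submodule.orthogonalProjection (Kn (n + 1)) z : X) with hw
    have hw_orth : w ∈ (Kn (n + 1))ᗮ := Submodule.sub_starProjection_mem_orthogonal (K := Kn (n + 1)) z
    have hw_mem : w ∈ Kn n :=
      Submodule.sub_mem _ (hzmem n) (hmono n (SetLike.coe_mem _))
    have hw_ne : w ≠ 0 := by
      intro h0
      apply hznot n
      have : z = (Submodule.orthogonalProjection (Kn (n + 1)) z : X) := by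
        rwa [sub_eq_zero] at h0
      show z ∈ Kn (n + 1)
      rw [this]
      exact SetLike.coe_mem _
    refine ⟨‖w‖⁻¹ • w, Submodule.smul_mem _ _ hw_mem, Submodule.smul_mem _ _ hw_orth, ?_⟩
    rw [norm_smul, norm_inv, norm_norm, inv_mul_cancel₀ (norm_ne_zero_iff.mpr hw_ne)]
  choose e he1 he2 he3 using hxc
  -- separation bound
  have hbound : ∀ a b : ℕ, a < b → 1 ≤ ‖(S - 1) (e a) - (S - 1) (e b)‖ := by
    intro a b hab
    set y := S (e a) - S (e b) + e b with hy
    have hymem : y ∈ Kn (a + 1) := by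
      apply Submodule.add_mem
      · apply Submodule.sub_mem
        · exact hstep a _ (he1 a)
        · exact hanti (by omega : a + 1 ≤ b + 1) (hstep b _ (he1 b))
      · exact hanti (by omega : a + 1 ≤ b) (he1 b)
    have hEq : (S - 1) (e a) - (S - 1) (e b) = y - e a := by
      simp only [hy, ContinuousLinearMap.sub_apply, ContinuousLinearMap.one_apply]
      abel
    rw [hEq]
    have horth : (inner ℝ y (e a) : ℝ) = 0 := (Submodule.mem_orthogonal _ _).mp (he2 a) y hymem
    have hsq : ‖y - e a‖ ^ 2 = ‖y‖ ^ 2 - 2 * (inner ℝ y (e a) : ℝ) + ‖e a‖ ^ 2 :=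
      norm_sub_sq_real y (e a)
    have h1 : ‖e a‖ = 1 := he3 a
    nlinarith [norm_nonneg (y - e a), norm_nonneg y]
  -- compactness contradiction
  obtain ⟨l, φ, hφ, hconv⟩ := compact_seq (S - 1) hC e (r := 1) (fun n => (he3 n).le)
  have hcauchy := hconv.cauchySeq
  rw [Metric.cauchySeq_iff] at hcauchy
  obtain ⟨N, hN⟩ := hcauchy 1 one_pos
  have hlt := hN N le_rfl (N + 1) (by omega)
  rw [dist_eq_norm] at hlt
  exact absurd hlt (not_lt.mpr (hbound (φ N) (φ (N + 1)) (hφ (by omega))))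

end Aux

/-- If `K` is Lagrangian, `A` is boundedly invertible with `A - I` compact, and the
symplectic form `ω(u,v) = ⟨Ju,v⟩` vanishes on `L = A(K)`, then `L` is Lagrangian
(closed and maximal isotropic). -/
theorem statement3 {X : Type*} [NormedAddCommGroup X] [InnerProductSpace ℝ X]
    [CompleteSpace X]
    (J : X →L[ℝ] X) (hJadj : ContinuousLinearMap.adjoint J = -J) (hJ2 : J * J = -1)
    (K : Submodule ℝ X) (hKclosed : IsClosed (K : Set X))
    (hKiso : ∀ u ∈ K, ∀ v ∈ K, (inner ℝ (J u) v : ℝ) = 0)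
    (hKmax : ∀ u : X, (∀ v ∈ K, (inner ℝ (J u) v : ℝ) = 0) → u ∈ K)
    (A : X →L[ℝ] X) (hA : IsUnit A) (hAc : IsCompactOperator (⇑(A - 1)))
    (hLiso : ∀ u ∈ K.map (A : X →ₗ[ℝ] X), ∀ v ∈ K.map (A : X →ₗ[ℝ] X), (inner ℝ (J u) v : ℝ) = 0) :
    IsClosed ((K.map (A : X →ₗ[ℝ] X) : Submodule ℝ X) : Set X) ∧
      ∀ u : X, (∀ v ∈ K.map (A : X →ₗ[ℝ] X), (inner ℝ (J u) v : ℝ) = 0) → u ∈ K.map (A : X →ₗ[ℝ] X) := by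
  obtain ⟨a, ha⟩ := hA
  have hJmul : J * -J = 1 := by rw [mul_neg, hJ2, neg_neg]
  have hJmul' : -J * J = 1 := by rw [neg_mul, hJ2, neg_neg]
  set jU : (X →L[ℝ] X)ˣ := ⟨J, -J, hJmul, hJmul'⟩ with hjU
  have hadj_inv : adjoint A * adjoint (↑a⁻¹ : X →L[ℝ] X) = 1 := by
    have h1 : adjoint A ∘L adjoint (↑a⁻¹ : X →L[ℝ] X)
        = adjoint ((↑a⁻¹ : X →L[ℝ] X) ∘L A) := (adjoint_comp _ _).symm
    have h2 : (↑a⁻¹ : X →L[ℝ] X) ∘L A = 1 := by rw [← ha]; exact a.inv_mul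
    calc adjoint A * adjoint (↑a⁻¹ : X →L[ℝ] X)
        = adjoint ((↑a⁻¹ : X →L[ℝ] X) ∘L A) := h1
      _ = 1 := by rw [h2, ContinuousLinearMap.one_def, adjoint_id]
  have hadj_inv' : adjoint (↑a⁻¹ : X →L[ℝ] X) * adjoint A = 1 := by
    have h1 : adjoint (↑a⁻¹ : X →L[ℝ] X) ∘L adjoint A
        = adjoint (A ∘L (↑a⁻¹ : X →L[ℝ] X)) := (adjoint_comp _ _).symm
    have h2 : A ∘L (↑a⁻¹ : X →L[ℝ] X) = 1 := by rw [← ha]; exact a.mul_inv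
    calc adjoint (↑a⁻¹ : X →L[ℝ] X) * adjoint A
        = adjoint (A ∘L (↑a⁻¹ : X →L[ℝ] X)) := h1
      _ = 1 := by rw [h2, ContinuousLinearMap.one_def, adjoint_id]
  set aStar : (X →L[ℝ] X)ˣ := ⟨adjoint A, adjoint (↑a⁻¹ : X →L[ℝ] X), hadj_inv, hadj_inv'⟩
  set T : X →L[ℝ] X := -J * adjoint A * J with hT
  set S : X →L[ℝ] X := T * A with hS
  set tU : (X →L[ℝ] X)ˣ := jU⁻¹ * aStar * jU with htU
  have htUval : (↑tU : X →L[ℝ] X) = T := rfl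
  set sU : (X →L[ℝ] X)ˣ := tU * a with hsU
  have hsUval : (↑sU : X →L[ℝ] X) = S := by
    rw [hsU, Units.val_mul, htUval, ha]
  have hT_apply : ∀ x : X, T x = -(J ((adjoint A) (J x))) := by
    intro x
    simp [hT, mul_apply, neg_apply]
  have hJJ : ∀ x : X, J (J x) = -x := by
    intro x
    rw [← ContinuousLinearMap.mul_apply, hJ2]; simp
  -- K^perp = J(K)
  have hJK : ∀ w : X, w ∈ Kᗮ → ∃ k ∈ K, J k = w := by
    intro w hw
    have hJJw : J (-(J w)) = w := by rw [map_neg, hJJ, neg_neg]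
    refine ⟨-(J w), hKmax _ ?_, hJJw⟩
    intro v hv
    rw [hJJw]
    rw [real_inner_comm]
    exact (Submodule.mem_orthogonal K w).mp hw v hv
  -- S maps K to K
  have hSK : ∀ k ∈ K, S k ∈ K := by
    intro k hk
    apply hKmax
    intro v hv
    have h1 : S k = T (A k) := rfl
    have h2 : J (S k) = (adjoint A) (J (A k)) := by
      rw [h1, hT_apply, map_neg, hJJ, neg_neg]
    rw [h2, adjoint_inner_left]
    exact hLiso (A k) ⟨k, hk, rfl⟩ (A v) ⟨v, hv, rfl⟩
  -- compactness of S - 1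
  have hadj_sub : adjoint (A - 1) = adjoint A - 1 := by
    rw [map_sub, ContinuousLinearMap.one_def, adjoint_id]
  have hc1 : IsCompactOperator ⇑(adjoint (A - 1)) := schauder _ hAc
  have hc2 : IsCompactOperator ⇑(T - 1) := by
    have heq : ⇑(T - 1) = ⇑(-J : X →L[ℝ] X) ∘ ⇑(adjoint (A - 1)) ∘ ⇑J := by
      funext x
      simp only [Function.comp_apply, sub_apply, ContinuousLinearMap.one_apply, hadj_sub, neg_apply, map_sub]
      rw [hT_apply]
      rw [hJJ, neg_neg]
    rw [heq]
    exact (hc1.comp_clm J).clm_comp (-J : X →L[ℝ] X)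
  have hc3 : IsCompactOperator ⇑(T * (A - 1)) := by
    have heq : ⇑(T * (A - 1)) = ⇑T ∘ ⇑(A - 1) := rfl
    rw [heq]; exact hAc.clm_comp T
  have hScomp : IsCompactOperator ⇑(S - 1) := by
    have heq : ⇑(S - 1) = fun x => (T * (A - 1)) x + (T - 1) x := by
      funext x
      simp only [sub_apply, ContinuousLinearMap.one_apply, ContinuousLinearMap.mul_apply, map_sub]
      show T (A x) - x = T (A x) - T x + (T x - x)
      abel
    rw [heq]
    exact hc3.add hc2
  -- closedness of L
  have hclosedL : IsClosed ((K.map (A : X →ₗ[ℝ] X) : Submodule ℝ X) : Set X) := by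
    have h := map_unit_closed a K hKclosed
    rwa [ha] at h
  refine ⟨hclosedL, ?_⟩
  intro w hw
  have h2 : adjoint A (J w) ∈ Kᗮ := by
    rw [Submodule.mem_orthogonal]
    intro v hv
    rw [real_inner_comm, adjoint_inner_left]
    exact hw (A v) ⟨v, hv, rfl⟩
  obtain ⟨k₀, hk₀, hJk₀⟩ := hJK _ h2
  have hTw : T w ∈ K := by
    have h3 : T w = k₀ := by
      rw [hT_apply, ← hJk₀, hJJ, neg_neg]
    rwa [h3]
  have hScomp' : IsCompactOperator ⇑((↑sU : X →L[ℝ] X) - 1) := by rwa [hsUval]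
  have hSK' : ∀ k ∈ K, (↑sU : X →L[ℝ] X) k ∈ K := by rw [hsUval]; exact hSK
  obtain ⟨y, hy, hSy⟩ := riesz_surj sU hScomp' K hKclosed hSK' (T w) hTw
  refine ⟨y, hy, ?_⟩
  have h4 : T (A y) = T w := by
    rw [← hSy, hsUval]; rfl
  have hTinj := unit_inj tU
  rw [htUval] at hTinj
  exact hTinj h4
end

section
/- Let X be a Hilbert space, {A_s} a continuous family of bounded operators with A_s - I compact for each s, and L a closed subspace with ran(A_s) + L = X for all s. Fix s₀. Then there exist a neighborhood Σ₀ of s₀ and a family {B_s} of bounded operators such that A_s - B_s has finite rank, B_s is boundedly invertible with B_s - I and B_s⁻¹ - I compact, the preimage K_s = {u ∈ X : A_s u ∈ L} equals B_s⁻¹(L), and s ↦ B_s is continuous (and is C^k if s ↦ A_s is C^k). -/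
set_option synthInstance.maxHeartbeats 1000000
set_option maxHeartbeats 2000000

open ContinuousLinearMap in
/-- A continuous linear map with finite-dimensional range is a compact operator. -/
lemma aux_finrank_compact {X : Type*} [NormedAddCommGroup X] [NormedSpace ℝ X]
    (f : X →L[ℝ] X) (hf : FiniteDimensional ℝ (LinearMap.range (f : X →ₗ[ℝ] X))) :
    IsCompactOperator ⇑f := by
  set Y := LinearMap.range (f : X →ₗ[ℝ] X)
  haveI : FiniteDimensional ℝ Y := hf
  set f' : X →L[ℝ] Y := f.codRestrict Y (fun x => LinearMap.mem_range_self _ x)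
  refine ⟨Subtype.val '' Metric.closedBall (0 : Y) ‖f'‖,
    (isCompact_closedBall (0:Y) ‖f'‖).image continuous_subtype_val, ?_⟩
  refine Filter.mem_of_superset (Metric.ball_mem_nhds 0 one_pos) ?_
  intro x hx
  refine ⟨f' x, ?_, rfl⟩
  simp only [Metric.mem_closedBall, dist_zero_right]
  have h1 : ‖x‖ ≤ 1 := by
    have := (Metric.mem_ball.mp hx); rw [dist_zero_right] at this; exact this.le
  calc ‖f' x‖ ≤ ‖f'‖ * 1 := f'.le_opNorm_of_le h1
    _ = ‖f'‖ := mul_one _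

lemma aux_approx {X : Type*} [NormedAddCommGroup X] [InnerProductSpace ℝ X]
    (Kop : X →L[ℝ] X) (hK : IsCompactOperator ⇑Kop) :
    ∃ F : X →L[ℝ] X, FiniteDimensional ℝ (LinearMap.range (F : X →ₗ[ℝ] X)) ∧ ‖Kop - F‖ < 1 := by
  have hcpt : IsCompact (closure (⇑Kop '' Metric.closedBall 0 1)) :=
    hK.isCompact_closure_image_closedBall (𝕜₁ := ℝ) 1
  obtain ⟨t, htf, hts⟩ := Metric.totallyBounded_iff.mp hcpt.totallyBounded (1/2) (by norm_num)
  set V : Submodule ℝ X := Submodule.span ℝ t with hV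
  haveI : FiniteDimensional ℝ V := FiniteDimensional.span_of_finite ℝ htf
  set P : X →L[ℝ] X := V.subtypeL.comp (Submodule.orthogonalProjectionOnto V) with hP
  refine ⟨P.comp Kop, ?_, ?_⟩
  · have hle : LinearMap.range ((P.comp Kop : X →L[ℝ] X) : X →ₗ[ℝ] X) ≤ V := by
      rintro x ⟨y, rfl⟩
      exact (Submodule.orthogonalProjectionOnto V (Kop y)).2
    exact Submodule.finiteDimensional_of_le hle
  · have key : ∀ x : X, ‖(Kop - P.comp Kop) x‖ ≤ (1/2) * ‖x‖ := by
      intro x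
      rcases eq_or_ne x 0 with rfl | hx
      · simp
      · set u := ‖x‖⁻¹ • x with hu
        have hu1 : ‖u‖ = 1 := norm_smul_inv_norm hx
        have humem : u ∈ Metric.closedBall (0:X) 1 := by
          simp [Metric.mem_closedBall, hu1]
        have : Kop u ∈ closure (⇑Kop '' Metric.closedBall 0 1) :=
          subset_closure ⟨u, humem, rfl⟩
        obtain ⟨y, hyt, hyb⟩ := Set.mem_iUnion₂.mp (hts this)
        have hyV : y ∈ V := Submodule.subset_span hyt
        have hmin : ‖Kop u - P (Kop u)‖ ≤ ‖Kop u - y‖ := by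
          have h1 : ‖Kop u - P (Kop u)‖ = ⨅ x : V, ‖Kop u - x‖ :=
            by have := Submodule.starProjection_minimal (U := V) (Kop u); rw [Submodule.starProjection_apply] at this; exact this
          rw [h1]
          exact ciInf_le ⟨0, by rintro _ ⟨z, rfl⟩; positivity⟩ (⟨y, hyV⟩ : V)
        have hdist : ‖Kop u - y‖ < 1/2 := by
          have := Metric.mem_ball.mp hyb
          rw [dist_comm, dist_eq_norm] at this; rwa [norm_sub_rev]
        have hub : ‖(Kop - P.comp Kop) u‖ ≤ 1/2 := by
          simpa using hmin.trans hdist.le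
        have hxu : x = ‖x‖ • u := by
          rw [hu, smul_inv_smul₀ (norm_ne_zero_iff.mpr hx)]
        calc ‖(Kop - P.comp Kop) x‖ = ‖(Kop - P.comp Kop) (‖x‖ • u)‖ := by rw [← hxu]
          _ = ‖x‖ * ‖(Kop - P.comp Kop) u‖ := by
              rw [map_smul, norm_smul, Real.norm_eq_abs, abs_of_nonneg (norm_nonneg x)]
          _ ≤ ‖x‖ * (1/2) := by
              exact mul_le_mul_of_nonneg_left hub (norm_nonneg x)
          _ = (1/2) * ‖x‖ := mul_comm _ _
    have := ContinuousLinearMap.opNorm_le_bound _ (by norm_num : (0:ℝ) ≤ 1/2) key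
    linarith

section Aux3
open Submodule LinearMap

lemma aux_correction {X : Type*} [NormedAddCommGroup X] [InnerProductSpace ℝ X]
    [CompleteSpace X]
    (F₁ : X →L[ℝ] X) (hF₁ : FiniteDimensional ℝ (LinearMap.range (F₁ : X →ₗ[ℝ] X)))
    (L'' : Submodule ℝ X) (hsup : LinearMap.range ((1 + F₁ : X →L[ℝ] X) : X →ₗ[ℝ] X) ⊔ L'' = ⊤) :
    ∃ G : X →L[ℝ] X, LinearMap.range (G : X →ₗ[ℝ] X) ≤ L'' ∧
      FiniteDimensional ℝ (LinearMap.range (G : X →ₗ[ℝ] X)) ∧ IsUnit (1 + F₁ + G) := by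
  classical
  set T : X →L[ℝ] X := 1 + F₁ with hT
  have hTapp : ∀ x : X, T x = x + F₁ x := fun x => rfl
  set W : Submodule ℝ X := LinearMap.range (F₁ : X →ₗ[ℝ] X) with hW
  haveI : FiniteDimensional ℝ W := hF₁
  set N : Submodule ℝ X := LinearMap.ker (T : X →ₗ[ℝ] X) with hN
  set R : Submodule ℝ X := LinearMap.range (T : X →ₗ[ℝ] X) with hR
  -- N ≤ W
  have hNW : N ≤ W := by
    intro x hx
    have hx' : x + F₁ x = 0 := hx
    have : F₁ (-x) = x := by
      rw [map_neg]
      exact (eq_neg_of_add_eq_zero_left hx').symm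
    exact ⟨-x, this⟩
  haveI : FiniteDimensional ℝ N := Submodule.finiteDimensional_of_le hNW
  -- R ⊔ W = ⊤
  have hRW : R ⊔ W = ⊤ := by
    rw [eq_top_iff]
    intro x _
    refine Submodule.mem_sup.mpr ⟨T x, ⟨x, rfl⟩, -(F₁ x), neg_mem ⟨x, rfl⟩, ?_⟩
    rw [hTapp]; abel
  -- T maps W into W
  have hTW : ∀ x : X, x ∈ W → (T : X →ₗ[ℝ] X) x ∈ W := by
    intro x hx
    have : (T : X →ₗ[ℝ] X) x = x + F₁ x := rfl
    rw [this]
    exact add_mem hx ⟨x, rfl⟩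
  set Tw : W →ₗ[ℝ] W := (T : X →ₗ[ℝ] X).restrict hTW with hTw
  -- R ⊓ W = map T W
  have hRinterW : R ⊓ W = Submodule.map (T : X →ₗ[ℝ] X) W := by
    apply le_antisymm
    · rintro x ⟨⟨v, rfl⟩, hxW⟩
      have hvW : v ∈ W := by
        have : v = T v - F₁ v := by rw [hTapp]; abel
        rw [this]
        exact sub_mem hxW ⟨v, rfl⟩
      exact ⟨v, hvW, rfl⟩
    · rintro x ⟨v, hvW, rfl⟩
      exact ⟨⟨v, rfl⟩, hTW v hvW⟩
  -- quotient
  set q : X →ₗ[ℝ] (X ⧸ R) := R.mkQ with hq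
  set qW : W →ₗ[ℝ] (X ⧸ R) := q ∘ₗ W.subtype with hqW
  have hqWrange : LinearMap.range qW = ⊤ := by
    rw [hqW, LinearMap.range_comp, Submodule.range_subtype]
    have : Submodule.map q (R ⊔ W) = ⊤ := by
      rw [hRW, Submodule.map_top, hq, Submodule.range_mkQ]
    rwa [Submodule.map_sup, hq, Submodule.mkQ_map_self, bot_sup_eq] at this
  haveI : FiniteDimensional ℝ (X ⧸ R) :=
    Module.Finite.of_surjective qW (LinearMap.range_eq_top.mp hqWrange)
  -- dimension count : finrank (X ⧸ R) = finrank N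
  have hdim : Module.finrank ℝ (X ⧸ R) = Module.finrank ℝ N := by
    have e1 := LinearMap.finrank_range_add_finrank_ker qW
    have e2 := LinearMap.finrank_range_add_finrank_ker Tw
    -- range qW = ⊤
    have h1 : Module.finrank ℝ (LinearMap.range qW) = Module.finrank ℝ (X ⧸ R) := by
      rw [hqWrange]; exact finrank_top ℝ _
    -- ker qW ≃ R ⊓ W
    have hker : LinearMap.ker qW = (R ⊓ W).comap W.subtype := by
      rw [hqW, LinearMap.ker_comp, hq, Submodule.ker_mkQ]
      ext x
      simp [x.2]
    have h2 : Module.finrank ℝ (LinearMap.ker qW) = Module.finrank ℝ (R ⊓ W : Submodule ℝ X) := by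
      rw [hker]
      exact LinearEquiv.finrank_eq (Submodule.comapSubtypeEquivOfLe inf_le_right)
    -- ker Tw ≃ N
    have hker2 : LinearMap.ker Tw = N.comap W.subtype := LinearMap.ker_restrict hTW
    have h3 : Module.finrank ℝ (LinearMap.ker Tw) = Module.finrank ℝ N := by
      rw [hker2]
      exact LinearEquiv.finrank_eq (Submodule.comapSubtypeEquivOfLe hNW)
    -- range Tw ≃ map T W = R ⊓ W
    have hmap : Submodule.map W.subtype (LinearMap.range Tw) =
        Submodule.map (T : X →ₗ[ℝ] X) W := by
      apply le_antisymm
      · rintro x ⟨w, ⟨v, rfl⟩, rfl⟩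
        exact ⟨v, v.2, rfl⟩
      · rintro x ⟨v, hvW, rfl⟩
        exact ⟨Tw ⟨v, hvW⟩, ⟨⟨v, hvW⟩, rfl⟩, rfl⟩
    have h4 : Module.finrank ℝ (LinearMap.range Tw) =
        Module.finrank ℝ (R ⊓ W : Submodule ℝ X) := by
      rw [hRinterW, ← hmap]
      exact LinearEquiv.finrank_eq
        (Submodule.equivMapOfInjective W.subtype (Submodule.injective_subtype W)
          (LinearMap.range Tw))
    omega
  -- Z : lift of a basis of X ⧸ R inside L''
  have hqL : Submodule.map q L'' = ⊤ := by
    have : Submodule.map q (R ⊔ L'') = ⊤ := by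
      rw [hsup, Submodule.map_top, hq, Submodule.range_mkQ]
    rwa [Submodule.map_sup, hq, Submodule.mkQ_map_self, bot_sup_eq] at this
  set d : ℕ := Module.finrank ℝ (X ⧸ R) with hd
  set bQ : Module.Basis (Fin d) ℝ (X ⧸ R) := Module.finBasis ℝ (X ⧸ R) with hbQ
  have hlift : ∀ i : Fin d, ∃ z : X, z ∈ L'' ∧ q z = bQ i := by
    intro i
    have : bQ i ∈ Submodule.map q L'' := by rw [hqL]; trivial
    obtain ⟨z, hz, hz2⟩ := this
    exact ⟨z, hz, hz2⟩
  choose z hz1 hz2 using hlift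
  set e0 : (X ⧸ R) →ₗ[ℝ] X := bQ.constr ℝ z with he0
  have hqe0 : ∀ v : X ⧸ R, q (e0 v) = v := by
    have : q ∘ₗ e0 = LinearMap.id := by
      apply bQ.ext
      intro i
      simp [he0, Module.Basis.constr_basis, hz2]
    intro v
    exact congrArg (fun f => f v) (congrArg DFunLike.coe this)
  set Z : Submodule ℝ X := LinearMap.range e0 with hZ
  have hZL : Z ≤ L'' := by
    rw [hZ, he0, Module.Basis.constr_range]
    rw [Submodule.span_le]
    rintro x ⟨i, rfl⟩
    exact hz1 i
  have he0inj : Function.Injective e0 :=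
    Function.LeftInverse.injective hqe0
  have eQZ : (X ⧸ R) ≃ₗ[ℝ] Z := LinearEquiv.ofInjective e0 he0inj
  haveI : FiniteDimensional ℝ Z := Module.Finite.equiv eQZ
  have hRZinf : R ⊓ Z = ⊥ := by
    rw [eq_bot_iff]
    rintro x ⟨hxR, v, rfl⟩
    have : q (e0 v) = 0 := by
      rw [hq]
      exact (Submodule.Quotient.mk_eq_zero R).mpr hxR
    rw [hqe0 v] at this
    simp [this]
  have hRZsup : R ⊔ Z = ⊤ := by
    rw [eq_top_iff]
    intro x _
    have hmem : x - e0 (q x) ∈ R := by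
      have : q (x - e0 (q x)) = 0 := by rw [map_sub, hqe0, sub_self]
      rwa [hq, ← LinearMap.mem_ker, Submodule.ker_mkQ] at this
    have : x = (x - e0 (q x)) + e0 (q x) := by abel
    rw [this]
    exact Submodule.add_mem_sup hmem ⟨q x, rfl⟩
  -- the equivalence N ≃ Z
  have hNZrank : Module.finrank ℝ N = Module.finrank ℝ Z := by
    rw [← hdim]
    exact (eQZ.finrank_eq).symm ▸ (eQZ.finrank_eq)
  set e : N ≃ₗ[ℝ] Z := LinearEquiv.ofFinrankEq _ _ hNZrank with he
  haveI : CompleteSpace N := FiniteDimensional.complete ℝ N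
  set PN : X →L[ℝ] N := Submodule.orthogonalProjectionOnto N with hPN
  set G : X →L[ℝ] X :=
    Z.subtypeL.comp ((LinearMap.toContinuousLinearMap e.toLinearMap).comp PN) with hG
  have hGapp : ∀ x : X, G x = (e (PN x) : X) := by
    intro x
    simp [hG]
  have hGZ : LinearMap.range (G : X →ₗ[ℝ] X) ≤ Z := by
    rintro x ⟨v, rfl⟩
    rw [ContinuousLinearMap.coe_coe, hGapp]
    exact (e (PN v)).2
  have hPNself : ∀ v : N, PN (v : X) = v := by
    intro v
    exact Submodule.orthogonalProjectionOnto_mem_subspace_eq_self v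
  refine ⟨G, hGZ.trans hZL, Submodule.finiteDimensional_of_le hGZ, ?_⟩
  rw [show (1 + F₁ + G : X →L[ℝ] X) = T + G from rfl, ContinuousLinearMap.isUnit_iff_bijective]
  constructor
  · -- injective
    have hker : ∀ x : X, T x + G x = 0 → x = 0 := by
      intro x hx0
      have hTx : T x ∈ R := ⟨x, rfl⟩
      have hGx : G x ∈ Z := by rw [hGapp]; exact (e (PN x)).2
      have h1 : T x = -(G x) := eq_neg_of_add_eq_zero_left hx0
      have hTZ : T x ∈ R ⊓ Z := ⟨hTx, h1 ▸ neg_mem hGx⟩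
      rw [hRZinf] at hTZ
      have hT0 : T x = 0 := hTZ
      have hG0 : G x = 0 := by
        rw [hT0, zero_add] at hx0; exact hx0
      have hxN : x ∈ N := by rw [hN, LinearMap.mem_ker]; exact hT0
      have hPNx : PN x = ⟨x, hxN⟩ := by
        have := hPNself ⟨x, hxN⟩
        exact this
      rw [hGapp, hPNx] at hG0
      have : e ⟨x, hxN⟩ = 0 := by
        exact Subtype.ext hG0
      have h0 : (⟨x, hxN⟩ : N) = 0 := by
        exact e.map_eq_zero_iff.mp this
      exact congrArg Subtype.val h0
    intro a b hab
    have h1 : T (a - b) + G (a - b) = 0 := by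
      have h2 : (T + G) (a - b) = 0 := by rw [map_sub, hab, sub_self]
      simpa [ContinuousLinearMap.add_apply] using h2
    exact sub_eq_zero.mp (hker _ h1)
  · -- surjective
    intro y
    have hy : y ∈ R ⊔ Z := hRZsup ▸ Submodule.mem_top
    obtain ⟨r, hrR, zv, hzZ, rfl⟩ := Submodule.mem_sup.mp hy
    obtain ⟨w, rfl⟩ := hrR
    set n' : N := e.symm ⟨zv, hzZ⟩ with hn'
    refine ⟨(w - (PN w : X)) + (n' : X), ?_⟩
    have hTP : T ((PN w : X)) = 0 := (PN w).2
    have hTn : T ((n' : X)) = 0 := n'.2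
    have hTx : T ((w - (PN w : X)) + (n' : X)) = T w := by
      rw [map_add, map_sub, hTP, hTn]; abel
    have hPNx : PN ((w - (PN w : X)) + (n' : X)) = n' := by
      rw [map_add, map_sub, hPNself (PN w), hPNself n']
      abel
    have hGx : G ((w - (PN w : X)) + (n' : X)) = zv := by
      rw [hGapp, hPNx, hn', LinearEquiv.apply_symm_apply]
    show T _ + G _ = T w + zv
    rw [hTx, hGx]

end Aux3

/-- Continuous (or `C^k`) family `A s` with `A s - 1` compact and `ran (A s) + L = X`:
near any `s₀` there is a `C^k` family `B s` of boundedly invertible operators, differing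
from `A s` by finite rank, with `B s - 1` and `B s⁻¹ - 1` compact, such that
`{u : A s u ∈ L} = B s⁻¹ (L)`. -/
theorem statement9 {X : Type*} [NormedAddCommGroup X] [InnerProductSpace ℝ X]
    [CompleteSpace X]
    (k : ℕ) (I : Set ℝ) (A : ℝ → X →L[ℝ] X)
    (hsm : ContDiffOn ℝ k A I)
    (hc : ∀ s ∈ I, IsCompactOperator (⇑(A s - 1)))
    (L : Submodule ℝ X) (hL : IsClosed (L : Set X))
    (hrange : ∀ s ∈ I, LinearMap.range (A s : X →ₗ[ℝ] X) ⊔ L = ⊤)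
    (s₀ : ℝ) (hs₀ : s₀ ∈ I) :
    ∃ ε > (0 : ℝ), ∃ B : ℝ → X →L[ℝ] X,
      ContDiffOn ℝ k B (I ∩ Metric.ball s₀ ε) ∧
      ∀ s ∈ I ∩ Metric.ball s₀ ε,
        FiniteDimensional ℝ ↥(LinearMap.range ((A s - B s : X →L[ℝ] X) : X →ₗ[ℝ] X)) ∧
        IsUnit (B s) ∧
        IsCompactOperator (⇑(B s - 1)) ∧
        IsCompactOperator (⇑(Ring.inverse (B s) - 1)) ∧
        (∀ u : X, A s u ∈ L ↔ B s u ∈ L) := by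
  rcases subsingleton_or_nontrivial X with hX | hX
  · -- degenerate case
    haveI : Subsingleton (X →L[ℝ] X) := ⟨fun f g => by
      ext x; exact Subsingleton.elim _ _⟩
    refine ⟨1, one_pos, A, hsm.mono Set.inter_subset_left, fun s hs => ?_⟩
    refine ⟨?_, ?_, hc s hs.1, ?_, fun u => Iff.rfl⟩
    · infer_instance
    · rw [Subsingleton.elim (A s) 1]; exact isUnit_one
    · rw [Subsingleton.elim (Ring.inverse (A s)) (A s)]; exact hc s hs.1
  · -- main case
    obtain ⟨F, hFfd, hFnorm⟩ := aux_approx (A s₀ - 1) (hc s₀ hs₀)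
    have hnorm : ‖1 - (A s₀ - F)‖ < 1 := by
      have h1 : (1 : X →L[ℝ] X) - (A s₀ - F) = -(A s₀ - 1 - F) := by abel
      rw [h1, norm_neg]; exact hFnorm
    set u : (X →L[ℝ] X)ˣ :=
      (Units.oneSub (1 - (A s₀ - F)) hnorm).copy (A s₀ - F)
        (by show A s₀ - F = 1 - (1 - (A s₀ - F)); abel) _ rfl with hu
    have huval : (↑u : X →L[ℝ] X) = A s₀ - F := rfl
    set F₁ : X →L[ℝ] X := ↑u⁻¹ * F with hF₁
    have hF₁fd : FiniteDimensional ℝ (LinearMap.range (F₁ : X →ₗ[ℝ] X)) := by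
      have hle : LinearMap.range (F₁ : X →ₗ[ℝ] X) ≤
          Submodule.map (↑(↑u⁻¹ : X →L[ℝ] X) : X →ₗ[ℝ] X) (LinearMap.range (F : X →ₗ[ℝ] X)) := by
        rintro x ⟨y, rfl⟩
        exact ⟨F y, ⟨y, rfl⟩, rfl⟩
      haveI := hFfd
      exact Submodule.finiteDimensional_of_le hle
    have hAeq : A s₀ = ↑u * (1 + F₁) := by
      rw [hF₁, mul_add, mul_one, ← mul_assoc, Units.mul_inv, one_mul, huval]
      abel
    -- the comap submodule
    set L'' : Submodule ℝ X :=
      Submodule.comap ((↑u : X →L[ℝ] X) : X →ₗ[ℝ] X) L with hL''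
    have hsup' : LinearMap.range ((1 + F₁ : X →L[ℝ] X) : X →ₗ[ℝ] X) ⊔ L'' = ⊤ := by
      rw [eq_top_iff]
      intro x _
      have hx : (↑u : X →L[ℝ] X) x ∈ LinearMap.range (A s₀ : X →ₗ[ℝ] X) ⊔ L := by
        rw [hrange s₀ hs₀]; trivial
      obtain ⟨a, ⟨w, rfl⟩, l, hlL, hal⟩ := Submodule.mem_sup.mp hx
      refine Submodule.mem_sup.mpr ⟨(1 + F₁) w, ⟨w, rfl⟩, (↑u⁻¹ : X →L[ℝ] X) l, ?_, ?_⟩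
      · show (↑u : X →L[ℝ] X) ((↑u⁻¹ : X →L[ℝ] X) l) ∈ L
        have : (↑u : X →L[ℝ] X) ((↑u⁻¹ : X →L[ℝ] X) l) = ((↑u * ↑u⁻¹ : X →L[ℝ] X)) l := rfl
        rw [this, Units.mul_inv]
        exact hlL
      · -- (1+F₁) w + u⁻¹ l = x
        have hinv : ∀ y : X, (↑u⁻¹ : X →L[ℝ] X) ((↑u : X →L[ℝ] X) y) = y := by
          intro y
          have : (↑u⁻¹ : X →L[ℝ] X) ((↑u : X →L[ℝ] X) y)
              = ((↑u⁻¹ * ↑u : X →L[ℝ] X)) y := rfl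
          rw [this, Units.inv_mul]; rfl
        have happ : A s₀ w = (↑u : X →L[ℝ] X) ((1 + F₁) w) := by
          rw [hAeq]; rfl
        have := congrArg (↑u⁻¹ : X →L[ℝ] X) hal
        rw [map_add, hinv, ContinuousLinearMap.coe_coe, happ, hinv] at this
        exact this
    obtain ⟨G, hGL, hGfd, hGunit⟩ := aux_correction F₁ hF₁fd L'' hsup'
    set C : X →L[ℝ] X := ↑u * G with hC
    have hCapp : ∀ x : X, C x = (↑u : X →L[ℝ] X) (G x) := fun x => rfl
    have hCL : ∀ x : X, C x ∈ L := by
      intro x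
      have : G x ∈ L'' := hGL ⟨x, rfl⟩
      exact this
    have hCfd : FiniteDimensional ℝ (LinearMap.range (C : X →ₗ[ℝ] X)) := by
      have hle : LinearMap.range (C : X →ₗ[ℝ] X) ≤
          Submodule.map ((↑u : X →L[ℝ] X) : X →ₗ[ℝ] X) (LinearMap.range (G : X →ₗ[ℝ] X)) := by
        rintro x ⟨y, rfl⟩
        exact ⟨G y, ⟨y, rfl⟩, rfl⟩
      haveI := hGfd
      exact Submodule.finiteDimensional_of_le hle
    have hCcompact : IsCompactOperator ⇑C := aux_finrank_compact C hCfd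
    -- B s₀ is a unit
    have hBs₀ : IsUnit (A s₀ + C) := by
      have : A s₀ + C = ↑u * (1 + F₁ + G) := by
        rw [hAeq, hC, ← mul_add]
      rw [this]
      exact u.isUnit.mul hGunit
    obtain ⟨w₀, hw₀⟩ := hBs₀
    haveI : Nontrivial (X →L[ℝ] X) := by
      obtain ⟨x, hx⟩ := exists_ne (0 : X)
      refine nontrivial_of_ne 1 0 fun h => hx ?_
      have := congrArg (fun f : X →L[ℝ] X => f x) h
      simpa using this
    set δ : ℝ := ‖(↑w₀⁻¹ : X →L[ℝ] X)‖⁻¹ with hδdef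
    have hδ : 0 < δ := inv_pos.mpr (Units.norm_pos w₀⁻¹)
    -- continuity
    have hcont : ContinuousWithinAt A I s₀ := (hsm.continuousOn) s₀ hs₀
    have hmem : A ⁻¹' Metric.ball (A s₀) δ ∈ nhdsWithin s₀ I :=
      hcont (Metric.ball_mem_nhds _ hδ)
    obtain ⟨ε, hε, hball⟩ := Metric.mem_nhdsWithin_iff.mp hmem
    refine ⟨ε, hε, fun s => A s + C, ?_, ?_⟩
    · exact (hsm.mono Set.inter_subset_left).add contDiffOn_const
    intro s hs
    have hAs : ‖A s - A s₀‖ < δ := by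
      have h1 : A s ∈ Metric.ball (A s₀) δ := hball ⟨hs.2, hs.1⟩
      rwa [Metric.mem_ball, dist_eq_norm] at h1
    have hBunit : IsUnit (A s + C) := by
      refine (w₀.ofNearby (A s + C) ?_).isUnit
      have : A s + C - ↑w₀ = A s - A s₀ := by rw [hw₀]; abel
      rw [this]
      exact hAs
    have hBm1 : IsCompactOperator ⇑(A s + C - 1) := by
      have hfun : ⇑(A s + C - 1) = ⇑(A s - 1) + ⇑C := by
        ext x
        simp only [ContinuousLinearMap.sub_apply, ContinuousLinearMap.add_apply,
          ContinuousLinearMap.one_apply, Pi.add_apply]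
        abel
      rw [hfun]
      exact (hc s hs.1).add hCcompact
    refine ⟨?_, hBunit, hBm1, ?_, ?_⟩
    · -- finite rank difference
      show FiniteDimensional ℝ ↥(LinearMap.range ((A s - (A s + C) : X →L[ℝ] X) : X →ₗ[ℝ] X))
      have hrangeeq : LinearMap.range ((A s - (A s + C) : X →L[ℝ] X) : X →ₗ[ℝ] X) = LinearMap.range (C : X →ₗ[ℝ] X) := by
        ext x
        constructor
        · rintro ⟨y, rfl⟩
          refine ⟨-y, ?_⟩
          have : (A s - (A s + C)) y = -(C y) := by
            simp only [ContinuousLinearMap.sub_apply, ContinuousLinearMap.add_apply]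
            abel
          rw [ContinuousLinearMap.coe_coe, ContinuousLinearMap.coe_coe, this, map_neg]
        · rintro ⟨y, rfl⟩
          refine ⟨-y, ?_⟩
          have : (A s - (A s + C)) (-y) = C y := by
            simp only [ContinuousLinearMap.sub_apply, ContinuousLinearMap.add_apply,
              map_neg]
            abel
          rw [ContinuousLinearMap.coe_coe, ContinuousLinearMap.coe_coe, this]
      rw [hrangeeq]
      exact hCfd
    · -- inverse minus one compact
      show IsCompactOperator ⇑(Ring.inverse (A s + C) - 1)
      obtain ⟨w, hw⟩ := hBunit
      rw [← hw, Ring.inverse_unit w]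
      have hfun : ⇑((↑w⁻¹ : X →L[ℝ] X) - 1)
          = ⇑(↑w⁻¹ : X →L[ℝ] X) ∘ ⇑((1 : X →L[ℝ] X) - ↑w) := by
        have h1 : (↑w⁻¹ : X →L[ℝ] X) - 1 = ↑w⁻¹ * (1 - ↑w) := by
          rw [mul_sub, mul_one, Units.inv_mul]
        rw [h1, ContinuousLinearMap.mul_def, ContinuousLinearMap.coe_comp']
      rw [hfun]
      have hcomp1 : IsCompactOperator ⇑((1 : X →L[ℝ] X) - ↑w) := by
        have h2 : ⇑((1 : X →L[ℝ] X) - ↑w) = -⇑(A s + C - 1) := by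
          ext x
          simp only [ContinuousLinearMap.sub_apply, ContinuousLinearMap.add_apply,
            ContinuousLinearMap.one_apply, Pi.neg_apply, hw]
          abel
        rw [h2]
        exact hBm1.neg
      exact hcomp1.continuous_comp (↑w⁻¹ : X →L[ℝ] X).continuous
    · -- membership iff
      intro x
      constructor
      · intro hx
        exact L.add_mem hx (hCL x)
      · intro hx
        have : A s x = (A s x + C x) - C x := by abel
        rw [this]
        exact L.sub_mem hx (hCL x)
end

section
/- Let X be a Hilbert space, Q a projection, D ∈ B(ran(Q), X) injective, A = DQ + (I − Q) with A − I compact. Let S₀ : (I − Q)(ker A) → (ran A)^⊥ be a linear bijection (such exists since these spaces have equal finite dimension) and R₀ the orthogonal projection onto (I − Q)(ker A). Then F = A + S₀ R₀ (I − Q) is boundedly invertible, F − I is compact, and ran(F Q) = ran(A Q). -/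
open Metric Set
open scoped RealInnerProductSpace

/-- A continuous linear map with finite-dimensional range is a compact operator. -/
lemma aux_compact_of_finiteRank {X : Type*} [NormedAddCommGroup X] [NormedSpace ℝ X]
    (T : X →L[ℝ] X) (h : FiniteDimensional ℝ (LinearMap.range (T : X →ₗ[ℝ] X))) :
    IsCompactOperator ⇑T := by
  set V := LinearMap.range (T : X →ₗ[ℝ] X) with hV
  haveI : FiniteDimensional ℝ V := h
  refine ⟨Subtype.val '' (Metric.closedBall (0 : V) ‖T‖), ?_, ?_⟩
  · exact (isCompact_closedBall _ _).image continuous_subtype_val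
  · have : Metric.closedBall (0 : X) 1 ⊆ T ⁻¹' (Subtype.val '' Metric.closedBall (0 : V) ‖T‖) := by
      intro x hx
      refine ⟨⟨T x, LinearMap.mem_range_self _ x⟩, ?_, rfl⟩
      simp only [Metric.mem_closedBall, dist_zero_right] at hx ⊢
      calc ‖(⟨T x, LinearMap.mem_range_self _ x⟩ : V)‖ = ‖T x‖ := rfl
        _ ≤ ‖T‖ * ‖x‖ := T.le_opNorm x
        _ ≤ ‖T‖ * 1 := by
            exact mul_le_mul_of_nonneg_left hx (norm_nonneg T)
        _ = ‖T‖ := mul_one _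
    exact Filter.mem_of_superset (Metric.closedBall_mem_nhds 0 one_pos) this

/-- Riesz: an injective operator which is a compact perturbation of the identity
is bounded below. -/
lemma aux_bddBelow {X : Type*} [NormedAddCommGroup X] [NormedSpace ℝ X]
    (T : X →L[ℝ] X) (hc : IsCompactOperator ⇑(T - 1)) (hinj : Function.Injective ⇑T) :
    ∃ c : ℝ, 0 < c ∧ ∀ x, ‖x‖ ≤ c * ‖T x‖ := by
  by_contra hcon
  push_neg at hcon
  -- extract sequence of unit vectors with T yₙ → 0
  have hseq : ∀ n : ℕ, ∃ y : X, ‖y‖ = 1 ∧ ‖T y‖ < 1 / (n + 1) := by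
    intro n
    obtain ⟨x, hx⟩ := hcon (n + 1) (by positivity)
    have hx0 : x ≠ 0 := by
      intro h; rw [h] at hx; simp at hx
    refine ⟨‖x‖⁻¹ • x, ?_, ?_⟩
    · rw [norm_smul, norm_inv, norm_norm, inv_mul_cancel₀ (norm_ne_zero_iff.2 hx0)]
    · rw [map_smul, norm_smul, norm_inv, norm_norm]
      have hTx : ‖T x‖ < ‖x‖ / ((n : ℝ) + 1) := by
        rw [lt_div_iff₀ (by positivity)]
        calc ‖T x‖ * ((n : ℝ) + 1) = ((n : ℝ) + 1) * ‖T x‖ := mul_comm _ _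
          _ < ‖x‖ := hx
      calc ‖x‖⁻¹ * ‖T x‖ < ‖x‖⁻¹ * (‖x‖ / ((n : ℝ) + 1)) := by
            exact mul_lt_mul_of_pos_left hTx (inv_pos.2 (norm_pos_iff.2 hx0))
        _ = 1 / ((n:ℝ) + 1) := by
            field_simp

  choose y hy1 hy2 using hseq
  have hTy : Filter.Tendsto (fun n => T (y n)) Filter.atTop (nhds 0) := by
    rw [tendsto_zero_iff_norm_tendsto_zero]
    apply squeeze_zero (fun n => norm_nonneg _) (fun n => le_of_lt (hy2 n))
    exact tendsto_one_div_add_atTop_nhds_zero_nat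
  obtain ⟨K, hK, hKmem⟩ := hc
  obtain ⟨r, hr, hball⟩ := Metric.mem_nhds_iff.1 hKmem
  set c : ℝ := r / 2 with hcdef
  have hcpos : 0 < c := by positivity
  have hmemK : ∀ n, (T - 1) (c • y n) ∈ K := by
    intro n
    apply hball
    simp only [Metric.mem_ball, dist_zero_right, norm_smul, hy1, mul_one,
      Real.norm_eq_abs, abs_of_pos hcpos]
    rw [hcdef]; linarith
  obtain ⟨z, hzK, φ, hφ, hconv⟩ := hK.isSeqCompact hmemK
  -- c • y (φ n) = c • T (y (φ n)) - (T-1)(c • y (φ n)) → -z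
  have hy_conv : Filter.Tendsto (fun n => y (φ n)) Filter.atTop (nhds (-(c⁻¹ • z))) := by
    have h1 : ∀ n, c⁻¹ • (c • T (y (φ n))) - c⁻¹ • ((T - 1) (c • y (φ n))) = y (φ n) := by
      intro n
      simp only [ContinuousLinearMap.sub_apply, ContinuousLinearMap.one_apply, map_smul]
      match_scalars <;> field_simp <;> ring
    have hlim : Filter.Tendsto
        (fun n => c⁻¹ • (c • T (y (φ n))) - c⁻¹ • ((T - 1) (c • y (φ n))))
        Filter.atTop (nhds (c⁻¹ • (c • (0:X)) - c⁻¹ • z)) := by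
      exact (((hTy.comp hφ.tendsto_atTop).const_smul c).const_smul c⁻¹).sub
        (hconv.const_smul c⁻¹)
    have := hlim.congr h1
    simpa using this
  set w := -(c⁻¹ • z) with hw
  have hwnorm : ‖w‖ = 1 := by
    have := (continuous_norm.tendsto w).comp hy_conv
    simp only [Function.comp_def, hy1] at this
    exact (tendsto_const_nhds_iff.1 this).symm
  have hTw : T w = 0 := by
    have h1 : Filter.Tendsto (fun n => T (y (φ n))) Filter.atTop (nhds (T w)) :=
      (T.continuous.tendsto w).comp hy_conv
    have h2 : Filter.Tendsto (fun n => T (y (φ n))) Filter.atTop (nhds 0) :=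
      hTy.comp hφ.tendsto_atTop
    exact tendsto_nhds_unique h1 h2
  have : w = 0 := hinj (by rw [hTw, map_zero])
  rw [this, norm_zero] at hwnorm
  norm_num at hwnorm

/-- Riesz: the kernel of a compact perturbation of the identity is finite dimensional. -/
lemma aux_ker_fd {X : Type*} [NormedAddCommGroup X] [NormedSpace ℝ X]
    (T : X →L[ℝ] X) (hc : IsCompactOperator ⇑(T - 1)) :
    FiniteDimensional ℝ ↥(LinearMap.ker (T : X →ₗ[ℝ] X)) := by
  obtain ⟨K, hK, hKmem⟩ := hc
  obtain ⟨r, hr, hball⟩ := Metric.mem_nhds_iff.1 hKmem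
  set c : ℝ := r / 2 with hcdef
  have hcpos : 0 < c := by positivity
  set S : Set X := {x | x ∈ LinearMap.ker (T : X →ₗ[ℝ] X) ∧ ‖x‖ ≤ 1} with hS
  have hSsub : S ⊆ (fun z => (-c⁻¹) • z) '' K := by
    rintro x ⟨hx, hxn⟩
    have hmem : (T - 1) (c • x) ∈ K := by
      apply hball
      simp only [Metric.mem_ball, dist_zero_right, norm_smul,
        Real.norm_eq_abs, abs_of_pos hcpos]
      calc c * ‖x‖ ≤ c * 1 := mul_le_mul_of_nonneg_left hxn (le_of_lt hcpos)
        _ = c := mul_one c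
        _ < r := by rw [hcdef]; linarith
    refine ⟨(T - 1) (c • x), hmem, ?_⟩
    have hTx : T x = 0 := hx
    have he : (T - 1) (c • x) = -(c • x) := by
      simp [ContinuousLinearMap.sub_apply, map_smul, hTx]
    simp only [he, smul_neg, neg_smul, neg_neg, smul_smul]
    match_scalars
    field_simp
  have hSclosed : IsClosed S := by
    have h1 : IsClosed (LinearMap.ker (T : X →ₗ[ℝ] X) : Set X) := ContinuousLinearMap.isClosed_ker T
    have h2 : IsClosed {x : X | ‖x‖ ≤ 1} := isClosed_le continuous_norm continuous_const
    exact h1.inter h2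
  have hScompact : IsCompact S :=
    (hK.image (continuous_const_smul _)).of_isClosed_subset hSclosed hSsub
  have hball_cpt : IsCompact (Metric.closedBall (0 : ↥(LinearMap.ker (T : X →ₗ[ℝ] X))) 1) := by
    rw [Subtype.isCompact_iff]
    convert hScompact using 1
    ext x
    constructor
    · rintro ⟨⟨v, hv⟩, hmem, rfl⟩
      simp only [Metric.mem_closedBall] at hmem
      refine ⟨hv, ?_⟩
      simpa [dist_eq_norm] using hmem
    · rintro ⟨hv, hn⟩
      refine ⟨⟨x, hv⟩, ?_, rfl⟩
      simp only [Metric.mem_closedBall, dist_zero_right]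
      exact hn
  exact FiniteDimensional.of_isCompact_closedBall₀ ℝ one_pos hball_cpt

/-- With `A = DQ + (1 - Q)`, `A - 1` compact, `S₀` a bijection from `(1-Q)(ker A)` onto
`(ran A)^⊥` and `R₀` the orthogonal projection onto `(1-Q)(ker A)`, the operator
`F = A + S₀ R₀ (1 - Q)` is boundedly invertible, `F - 1` is compact, and
`ran (F Q) = ran (A Q)`. -/
theorem statement11 {X : Type*} [NormedAddCommGroup X] [InnerProductSpace ℝ X]
    [CompleteSpace X]
    (Q : X →L[ℝ] X) (hQ : IsIdempotentElem Q)
    (D : ↥(LinearMap.range (Q : X →ₗ[ℝ] X)) →L[ℝ] X) (hD : Function.Injective ⇑D)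
    (A : X →L[ℝ] X)
    (hA : A = D.comp (Q.codRestrict (LinearMap.range (Q : X →ₗ[ℝ] X))
      (fun x => LinearMap.mem_range_self (Q : X →ₗ[ℝ] X) x)) + (1 - Q))
    (hAc : IsCompactOperator (⇑(A - 1)))
    (R₀ : X →L[ℝ] X) (hR₀idem : IsIdempotentElem R₀) (hR₀sa : IsSelfAdjoint R₀)
    (hR₀range : LinearMap.range (R₀ : X →ₗ[ℝ] X) = Submodule.map ((1 - Q : X →L[ℝ] X) : X →ₗ[ℝ] X) (LinearMap.ker (A : X →ₗ[ℝ] X)))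
    (S₀ : X →L[ℝ] X)
    (hS₀inj : Set.InjOn ⇑S₀ ((Submodule.map ((1 - Q : X →L[ℝ] X) : X →ₗ[ℝ] X) (LinearMap.ker (A : X →ₗ[ℝ] X)) : Submodule ℝ X) : Set X))
    (hS₀range : Submodule.map (S₀ : X →ₗ[ℝ] X) (Submodule.map ((1 - Q : X →L[ℝ] X) : X →ₗ[ℝ] X) (LinearMap.ker (A : X →ₗ[ℝ] X)))
      = (LinearMap.range (A : X →ₗ[ℝ] X))ᗮ)
    (F : X →L[ℝ] X) (hF : F = A + S₀ * R₀ * (1 - Q)) :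
    IsUnit F ∧ IsCompactOperator (⇑(F - 1)) ∧
      LinearMap.range ((F * Q : X →L[ℝ] X) : X →ₗ[ℝ] X) = LinearMap.range ((A * Q : X →L[ℝ] X) : X →ₗ[ℝ] X) := by
  set T : X →L[ℝ] X := S₀ * R₀ * (1 - Q) with hTdef
  -- T applied pointwise
  have hTapp : ∀ x, T x = S₀ (R₀ ((1 - Q) x)) := fun x => rfl
  -- kernel of A is finite dimensional
  haveI hkfd : FiniteDimensional ℝ ↥(LinearMap.ker (A : X →ₗ[ℝ] X)) := aux_ker_fd A hAc
  -- the image submodules are finite dimensional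
  haveI hfd1 : FiniteDimensional ℝ ↥(Submodule.map ((1 - Q : X →L[ℝ] X) : X →ₗ[ℝ] X) (LinearMap.ker (A : X →ₗ[ℝ] X))) := by
    have he : Submodule.map ((1 - Q : X →L[ℝ] X) : X →ₗ[ℝ] X) (LinearMap.ker (A : X →ₗ[ℝ] X))
        = Submodule.map ((1 - Q : X →L[ℝ] X) : X →ₗ[ℝ] X) (LinearMap.ker (A : X →ₗ[ℝ] X)) := rfl
    rw [he]; infer_instance
  haveI hfd2 : FiniteDimensional ℝ
      ↥(Submodule.map (S₀ : X →ₗ[ℝ] X) (Submodule.map ((1 - Q : X →L[ℝ] X) : X →ₗ[ℝ] X) (LinearMap.ker (A : X →ₗ[ℝ] X)))) := by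
    have he : Submodule.map (S₀ : X →ₗ[ℝ] X) (Submodule.map ((1 - Q : X →L[ℝ] X) : X →ₗ[ℝ] X) (LinearMap.ker (A : X →ₗ[ℝ] X)))
        = Submodule.map (S₀ : X →ₗ[ℝ] X) (Submodule.map ((1 - Q : X →L[ℝ] X) : X →ₗ[ℝ] X) (LinearMap.ker (A : X →ₗ[ℝ] X))) := rfl
    rw [he]; infer_instance
  -- T has values in S₀ '' ((1-Q) '' ker A) = (range A)ᗮ
  have hTmem' : ∀ x, T x ∈ Submodule.map (S₀ : X →ₗ[ℝ] X) (Submodule.map ((1 - Q : X →L[ℝ] X) : X →ₗ[ℝ] X) (LinearMap.ker (A : X →ₗ[ℝ] X))) := by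
    intro x
    refine ⟨R₀ ((1 - Q) x), ?_, rfl⟩
    rw [← hR₀range]
    exact LinearMap.mem_range_self _ _
  have hTmem : ∀ x, T x ∈ (LinearMap.range (A : X →ₗ[ℝ] X))ᗮ := fun x => hS₀range ▸ hTmem' x
  -- T has finite rank
  have hTfd : FiniteDimensional ℝ ↥(LinearMap.range (T : X →ₗ[ℝ] X)) := by
    apply Submodule.finiteDimensional_of_le (S₂ := Submodule.map (S₀ : X →ₗ[ℝ] X)
      (Submodule.map ((1 - Q : X →L[ℝ] X) : X →ₗ[ℝ] X) (LinearMap.ker (A : X →ₗ[ℝ] X))))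
    rintro _ ⟨x, rfl⟩
    exact hTmem' x
  have hTc : IsCompactOperator ⇑T := aux_compact_of_finiteRank T hTfd
  -- F - 1 is compact
  have hF1 : F - 1 = (A - 1) + T := by rw [hF]; abel
  have hFc : IsCompactOperator ⇑(F - 1) := by
    rw [hF1]
    have : ⇑((A - 1) + T) = ⇑(A - 1) + ⇑T := by ext x; simp
    rw [this]
    exact hAc.add hTc
  -- R₀ fixes its range
  have hfix : ∀ y, y ∈ Submodule.map ((1 - Q : X →L[ℝ] X) : X →ₗ[ℝ] X) (LinearMap.ker (A : X →ₗ[ℝ] X)) → R₀ y = y := by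
    intro y hy
    rw [← hR₀range] at hy
    obtain ⟨w, rfl⟩ := hy
    change R₀ (R₀ w) = R₀ w
    conv_lhs => rw [← ContinuousLinearMap.mul_apply, hR₀idem]
  -- F is injective
  have hker : ∀ x, F x = 0 → x = 0 := by
    intro x hx
    have hFx : A x + T x = 0 := by
      have : F x = A x + T x := by rw [hF]; rfl
      rw [← this]; exact hx
    have hinner : ⟪A x, T x⟫ = 0 :=
      (Submodule.mem_orthogonal _ _).1 (hTmem x) (A x) (LinearMap.mem_range_self _ x)
    have hAx : A x = 0 := by
      have h1 : A x = -(T x) := eq_neg_of_add_eq_zero_left hFx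
      have h2 : ⟪A x, A x⟫ = 0 := by
        nth_rewrite 2 [h1]
        rw [inner_neg_right, hinner, neg_zero]
      exact inner_self_eq_zero.1 h2
    have hTx : T x = 0 := by
      have := hFx; rw [hAx, zero_add] at this; exact this
    have hxker : x ∈ LinearMap.ker (A : X →ₗ[ℝ] X) := LinearMap.mem_ker.2 hAx
    have h1Qx : (1 - Q) x ∈ Submodule.map ((1 - Q : X →L[ℝ] X) : X →ₗ[ℝ] X) (LinearMap.ker (A : X →ₗ[ℝ] X)) := ⟨x, hxker, rfl⟩
    have hS0 : S₀ ((1 - Q) x) = S₀ 0 := by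
      rw [map_zero, ← hfix _ h1Qx, ← hTapp x, hTx]
    have hQx : (1 - Q) x = 0 :=
      hS₀inj h1Qx (Submodule.zero_mem _) hS0
    have hQxx : Q x = x := by
      have h0 : x - Q x = 0 := by
        have := hQx
        simpa [ContinuousLinearMap.sub_apply] using this
      exact (sub_eq_zero.1 h0).symm
    -- now use injectivity of D
    have hAx2 : D ⟨Q x, LinearMap.mem_range_self (Q : X →ₗ[ℝ] X) x⟩ = 0 := by
      have : A x = D ⟨Q x, LinearMap.mem_range_self (Q : X →ₗ[ℝ] X) x⟩ + (1 - Q) x := by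
        rw [hA]; rfl
      rw [hAx, hQx, add_zero] at this
      exact this.symm
    have hD0 : (⟨Q x, LinearMap.mem_range_self (Q : X →ₗ[ℝ] X) x⟩ :
        ↥(LinearMap.range (Q : X →ₗ[ℝ] X))) = 0 := hD (by rw [hAx2, map_zero])
    have : Q x = 0 := congrArg Subtype.val hD0
    rw [← hQxx, this]
  have hFinj : Function.Injective ⇑F := by
    intro a b hab
    have : F (a - b) = 0 := by rw [map_sub, hab, sub_self]
    have := hker _ this
    exact sub_eq_zero.1 this
  -- F is bounded below, hence has closed range
  obtain ⟨c, hc, hbdd⟩ := aux_bddBelow F hFc hFinj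
  have hanti : AntilipschitzWith c.toNNReal ⇑F := by
    apply F.antilipschitz_of_bound
    intro x
    rw [Real.coe_toNNReal c (le_of_lt hc)]
    exact hbdd x
  have hclosed : IsClosed (Set.range ⇑F) := hanti.isClosed_range F.uniformContinuous
  -- range A ≤ range F
  have hsub1 : LinearMap.range (A : X →ₗ[ℝ] X) ≤ LinearMap.range (F : X →ₗ[ℝ] X) := by
    rintro _ ⟨x, rfl⟩
    have hmem : R₀ ((1 - Q) x) ∈ Submodule.map ((1 - Q : X →L[ℝ] X) : X →ₗ[ℝ] X) (LinearMap.ker (A : X →ₗ[ℝ] X)) := by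
      rw [← hR₀range]; exact LinearMap.mem_range_self _ _
    obtain ⟨k, hk, hkeq⟩ := hmem
    refine ⟨x - k, ?_⟩
    have hAk : A k = 0 := hk
    have hR₀k : R₀ ((1 - Q) k) = (1 - Q) k := hfix _ ⟨k, hk, rfl⟩
    have : F (x - k) = A x - A k + (S₀ (R₀ ((1 - Q) x)) - S₀ (R₀ ((1 - Q) k))) := by
      rw [hF]
      simp only [ContinuousLinearMap.add_apply, map_sub, hTapp]
      abel
    change F (x - k) = A x
    change (1 - Q) k = R₀ ((1 - Q) x) at hkeq
    rw [this, hAk, hR₀k, hkeq, sub_self, sub_zero, add_zero]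
  -- (range A)ᗮ ≤ range F
  have hsub2 : (LinearMap.range (A : X →ₗ[ℝ] X))ᗮ ≤ LinearMap.range (F : X →ₗ[ℝ] X) := by
    intro z hz
    rw [← hS₀range] at hz
    obtain ⟨y, hy, rfl⟩ := hz
    obtain ⟨k, hk, rfl⟩ := hy
    refine ⟨k, ?_⟩
    have hAk : A k = 0 := hk
    have : F k = A k + S₀ (R₀ ((1 - Q) k)) := by rw [hF]; rfl
    change F k = S₀ ((1 - Q) k)
    rw [this, hAk, zero_add, hfix ((1 - Q) k) ⟨k, hk, rfl⟩]
  -- range F = ⊤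
  have htop : LinearMap.range (F : X →ₗ[ℝ] X) = ⊤ := by
    have horth : (LinearMap.range (F : X →ₗ[ℝ] X))ᗮ = ⊥ := by
      rw [Submodule.eq_bot_iff]
      intro v hv
      have hv1 : v ∈ (LinearMap.range (A : X →ₗ[ℝ] X))ᗮ := by
        rw [Submodule.mem_orthogonal]
        intro u hu
        exact (Submodule.mem_orthogonal _ _).1 hv u (hsub1 hu)
      have hv2 : ⟪v, v⟫ = 0 :=
        (Submodule.mem_orthogonal _ _).1 hv v (hsub2 hv1)
      exact inner_self_eq_zero.1 hv2
    have hdense : (LinearMap.range (F : X →ₗ[ℝ] X)).topologicalClosure = ⊤ :=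
      Submodule.topologicalClosure_eq_top_iff.2 horth
    have hcl : (LinearMap.range (F : X →ₗ[ℝ] X)).topologicalClosure = LinearMap.range (F : X →ₗ[ℝ] X) := by
      apply IsClosed.submodule_topologicalClosure_eq
      have : (LinearMap.range (F : X →ₗ[ℝ] X) : Set X) = Set.range ⇑F := by
        ext x; simp [LinearMap.mem_range]
      rw [this]
      exact hclosed
    rw [← hcl, hdense]
  -- F is a unit
  have hFunit : IsUnit F := by
    have hkerF : LinearMap.ker (F : X →ₗ[ℝ] X) = ⊥ := LinearMap.ker_eq_bot.2 hFinj
    let e := ContinuousLinearEquiv.ofBijective F hkerF htop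
    refine ⟨⟨F, (e.symm : X →L[ℝ] X), ?_, ?_⟩, rfl⟩
    · ext x
      have := e.apply_symm_apply x
      simpa [ContinuousLinearMap.mul_apply, e] using this
    · ext x
      have := e.symm_apply_apply x
      simpa [ContinuousLinearMap.mul_apply, e] using this
  -- F Q = A Q
  have hFQ : F * Q = A * Q := by
    have hQQ : (1 - Q) * Q = 0 := by
      rw [sub_mul, one_mul, hQ.eq, sub_self]
    rw [hF, add_mul, mul_assoc (S₀ * R₀) (1 - Q) Q, hQQ, mul_zero, add_zero]
  exact ⟨hFunit, hFc, by rw [hFQ]⟩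
end

section
/- Let P be a (not necessarily orthogonal) bounded projection on a Hilbert space X. Then PP* + (I - P*)(I - P) is boundedly invertible, and Π = PP*(PP* + (I - P*)(I - P))⁻¹ is the orthogonal projection onto ran(P). -/
open ContinuousLinearMap RealInnerProductSpace

/-- For a (not necessarily orthogonal) bounded projection `P` on a Hilbert space,
`PP* + (1 - P*)(1 - P)` is boundedly invertible and
`Π = PP* (PP* + (1 - P*)(1 - P))⁻¹` is the orthogonal projection onto `ran P`. -/
theorem statement18 {X : Type*} [NormedAddCommGroup X] [InnerProductSpace ℝ X]
    [CompleteSpace X]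
    (P : X →L[ℝ] X) (hP : IsIdempotentElem P) :
    IsUnit (P * ContinuousLinearMap.adjoint P
        + (1 - ContinuousLinearMap.adjoint P) * (1 - P)) ∧
    IsIdempotentElem ((P * ContinuousLinearMap.adjoint P) *
      Ring.inverse (P * ContinuousLinearMap.adjoint P
        + (1 - ContinuousLinearMap.adjoint P) * (1 - P))) ∧
    IsSelfAdjoint ((P * ContinuousLinearMap.adjoint P) *
      Ring.inverse (P * ContinuousLinearMap.adjoint P
        + (1 - ContinuousLinearMap.adjoint P) * (1 - P))) ∧
    LinearMap.range ((((P * ContinuousLinearMap.adjoint P) *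
      Ring.inverse (P * ContinuousLinearMap.adjoint P
        + (1 - ContinuousLinearMap.adjoint P) * (1 - P)) : X →L[ℝ] X) : X →ₗ[ℝ] X))
      = LinearMap.range (P : X →ₗ[ℝ] X) := by
  set A := ContinuousLinearMap.adjoint P with hAdef
  set T := P * A + (1 - A) * (1 - P) with hTdef
  have hstarP : star P = A := star_eq_adjoint P
  have hstarA : star A = P := by rw [← hstarP, star_star]
  have hA : A * A = A := by rw [← hstarP, ← star_mul, hP.eq]
  have hXPP : ∀ S : X →L[ℝ] X, S * P * P = S * P := fun S => by
    rw [mul_assoc, hP.eq]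
  have hXAA : ∀ S : X →L[ℝ] X, S * A * A = S * A := fun S => by
    rw [mul_assoc, hA]
  -- T in the form 1 + d * star d
  have hTform : T = 1 + (P - A) * (A - P) := by
    have h1 : (P - A) * (A - P) = P * A - P * P - A * A + A * P := by noncomm_ring
    rw [hTdef, h1, hP.eq, hA]
    noncomm_ring
  have hstard : star (P - A) = A - P := by rw [star_sub, hstarP, hstarA]
  -- self-adjointness of T
  have hstarT : star T = T := by
    rw [hTform, star_add, star_one, star_mul, hstard, star_sub, hstarA, hstarP]
  -- coercivity
  have hcoer : ∀ x : X, ‖x‖ ^ 2 ≤ ⟪T x, x⟫ := by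
    intro x
    have h1 : T x = x + (P - A) ((A - P) x) := by
      rw [hTform]
      simp [ContinuousLinearMap.add_apply, ContinuousLinearMap.one_apply, mul_apply]
    have h2 : ⟪(P - A) ((A - P) x), x⟫ = ‖(A - P) x‖ ^ 2 := by
      have hadj : ContinuousLinearMap.adjoint (P - A) = A - P := by
        rw [← star_eq_adjoint, hstard]
      calc ⟪(P - A) ((A - P) x), x⟫
          = ⟪ContinuousLinearMap.adjoint (A - P) ((A - P) x), x⟫ := by
            rw [← hadj, ContinuousLinearMap.adjoint_adjoint]
        _ = ⟪(A - P) x, (A - P) x⟫ := ContinuousLinearMap.adjoint_inner_left _ _ _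
        _ = ‖(A - P) x‖ ^ 2 := real_inner_self_eq_norm_sq _
    rw [h1, inner_add_left, h2, real_inner_self_eq_norm_sq]
    nlinarith [sq_nonneg ‖(A - P) x‖]
  -- antilipschitz with constant 1
  have hbound : ∀ x : X, ‖x‖ ≤ 1 * ‖T x‖ := by
    intro x
    rcases eq_or_lt_of_le (norm_nonneg x) with h | h
    · rw [← h]; positivity
    · have := (hcoer x).trans (real_inner_le_norm (T x) x)
      rw [one_mul]
      nlinarith
  have hanti : AntilipschitzWith 1 T := T.antilipschitz_of_bound (by exact_mod_cast hbound)
  -- bijectivity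
  have hbij : Function.Bijective T := by
    rw [ContinuousLinearMap.bijective_iff_dense_range_and_antilipschitz]
    refine ⟨?_, 1, hanti⟩
    rw [Submodule.topologicalClosure_eq_top_iff, Submodule.eq_bot_iff]
    intro y hy
    have h0 : ⟪T y, y⟫ = 0 :=
      (Submodule.mem_orthogonal _ y).1 hy (T y) (LinearMap.mem_range_self _ y)
    have h1 := hcoer y
    rw [h0] at h1
    have : ‖y‖ = 0 := by nlinarith [norm_nonneg y]
    exact norm_eq_zero.mp this
  have hU : IsUnit T := ContinuousLinearMap.isUnit_iff_bijective.mpr hbij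
  set B := Ring.inverse T with hBdef
  have hTB : T * B = 1 := Ring.mul_inverse_cancel T hU
  have hBT : B * T = 1 := Ring.inverse_mul_cancel T hU
  -- key algebraic identities
  have hPT : P * T = P * A * P := by
    rw [hTdef]
    simp only [mul_add, add_mul, mul_sub, sub_mul, mul_one, one_mul, ← mul_assoc,
      hP.eq, hA, hXPP, hXAA]
    abel
  have hTP : T * P = P * A * P := by
    rw [hTdef]
    simp only [mul_add, add_mul, mul_sub, sub_mul, mul_one, one_mul, ← mul_assoc,
      hP.eq, hA, hXPP, hXAA]
    abel
  have hAT : A * T = A * P * A := by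
    rw [hTdef]
    simp only [mul_add, add_mul, mul_sub, sub_mul, mul_one, one_mul, ← mul_assoc,
      hP.eq, hA, hXPP, hXAA]
    abel
  have hTA : T * A = A * P * A := by
    rw [hTdef]
    simp only [mul_add, add_mul, mul_sub, sub_mul, mul_one, one_mul, ← mul_assoc,
      hP.eq, hA, hXPP, hXAA]
    abel
  have hPTc : P * T = T * P := hPT.trans hTP.symm
  have hATc : A * T = T * A := hAT.trans hTA.symm
  -- commutation of B with P and A
  have comm_inv : ∀ S : X →L[ℝ] X, S * T = T * S → S * B = B * S := by
    intro S h
    calc S * B = B * T * S * B := by rw [hBT, one_mul]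
      _ = B * (T * S) * B := by rw [mul_assoc B T S]
      _ = B * (S * T) * B := by rw [h]
      _ = B * S * (T * B) := by rw [mul_assoc, mul_assoc, mul_assoc]
      _ = B * S := by rw [hTB, mul_one]
  have hPB : P * B = B * P := comm_inv P hPTc
  have hAB : A * B = B * A := comm_inv A hATc
  -- star B = B
  have hstarB : star B = B := by
    have h1 : star B * T = 1 := by
      have h2 := congrArg star hTB
      rwa [star_mul, hstarT, star_one] at h2
    calc star B = star B * (T * B) := by rw [hTB, mul_one]
      _ = star B * T * B := by rw [mul_assoc]
      _ = B := by rw [h1, one_mul]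
  -- oriented rewriting rules
  have sBP : B * P = P * B := hPB.symm
  have sBP' : ∀ S : X →L[ℝ] X, B * (P * S) = P * (B * S) := fun S => by
    rw [← mul_assoc, sBP, mul_assoc]
  have sBA : B * A = A * B := hAB.symm
  have sBA' : ∀ S : X →L[ℝ] X, B * (A * S) = A * (B * S) := fun S => by
    rw [← mul_assoc, sBA, mul_assoc]
  have sTP' : ∀ S : X →L[ℝ] X, T * (P * S) = P * (T * S) := fun S => by
    rw [← mul_assoc, ← hPTc, mul_assoc]
  have sTA' : ∀ S : X →L[ℝ] X, T * (A * S) = A * (T * S) := fun S => by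
    rw [← mul_assoc, ← hATc, mul_assoc]
  have hr : ∀ S : X →L[ℝ] X, A * (P * (A * S)) = T * (A * S) := fun S => by
    rw [← mul_assoc, ← mul_assoc, ← hTA, mul_assoc]
  have hr2 : ∀ S : X →L[ℝ] X, P * (A * (P * S)) = T * (P * S) := fun S => by
    rw [← mul_assoc, ← mul_assoc, ← hTP, mul_assoc]
  have cTB : ∀ S : X →L[ℝ] X, T * (B * S) = S := fun S => by
    rw [← mul_assoc, hTB, one_mul]
  refine ⟨hU, ?_, ?_, ?_⟩
  -- idempotent
  · show P * A * B * (P * A * B) = P * A * B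
    simp only [mul_assoc, sBP, sBP', sBA, sBA', sTP', sTA', hr, hr2, cTB, hTB, mul_one]
  -- self-adjoint
  · show star (P * A * B) = P * A * B
    rw [star_mul, star_mul, hstarB, hstarP, hstarA]
    simp only [mul_assoc, sBP, sBP', sBA, sBA', sTP', sTA', hr, hr2, cTB, hTB, mul_one]
  -- range
  · have hPiP : P * A * B * P = P := by
      simp only [mul_assoc, sBP, sBP', sBA, sBA', sTP', sTA', hr, hr2, cTB, hTB, mul_one]
    apply le_antisymm
    · rintro x ⟨y, rfl⟩
      exact ⟨(A * B) y, by simp [mul_apply]⟩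
    · rintro x ⟨y, rfl⟩
      refine ⟨P y, ?_⟩
      have h := congrArg (fun f : X →L[ℝ] X => f y) hPiP
      simpa [mul_apply] using h
end
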